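/- Strong Normalisation: every term typable in the Add type system is strongly normalising, i.e. if Γ ⊢ t : T is derivable in Add for some context Γ and type T, then there is no infinite reduction sequence starting from t. -/

import Mathlib

set_option maxHeartbeats 1000000

/-! ## Terms of the non-deterministic call-by-value λ-calculus (de Bruijn indices) -/

inductive Tm : Type
  | var : ℕ → Tm
  | lam : Tm → Tm
  | app : Tm → Tm → Tm
  | add : Tm → Tm → Tm
  | zero : Tm
  deriving DecidableEq

namespace Tm

/-- Values: variables and abstractions. -/
inductive IsValue : Tm → Prop
  | var (n : ℕ) : IsValue (var n)
  | lam (t : Tm) : IsValue (lam t)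

/-- de Bruijn shifting: add `d` to every variable index `≥ c`. -/
def shift (d c : ℕ) : Tm → Tm
  | var n => if n < c then var n else var (n + d)
  | lam t => lam (shift d (c + 1) t)
  | app t u => app (shift d c t) (shift d c u)
  | add t u => add (shift d c t) (shift d c u)
  | zero => zero

/-- Capture-avoiding substitution of the variable `k` by `v` (removing the binder). -/
def subst (k : ℕ) (v : Tm) : Tm → Tm
  | var n => if n = k then shift k 0 v else if k < n then var (n - 1) else var n
  | lam t => lam (subst (k + 1) v t)
  | app t u => app (subst k v t) (subst k v u)
  | add t u => add (subst k v t) (subst k v u)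
  | zero => zero

/-- `ClosedUnder k t`: every free variable of `t` has index `< k`. -/
def ClosedUnder (k : ℕ) : Tm → Prop
  | var n => n < k
  | lam t => ClosedUnder (k + 1) t
  | app t u => ClosedUnder k t ∧ ClosedUnder k u
  | add t u => ClosedUnder k t ∧ ClosedUnder k u
  | zero => True

/-- Closed terms. -/
def Closed (t : Tm) : Prop := ClosedUnder 0 t

end Tm

open Tm

/-- The AC-equivalence on terms: the least congruence making `+`
associative and commutative (terms are considered modulo `Aeq`). -/
inductive Aeq : Tm → Tm → Prop
  | refl (t : Tm) : Aeq t t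
  | symm : Aeq t u → Aeq u t
  | trans : Aeq t u → Aeq u s → Aeq t s
  | comm (t u : Tm) : Aeq (.add t u) (.add u t)
  | assoc (t u s : Tm) : Aeq (.add t (.add u s)) (.add (.add t u) s)
  | lamCongr : Aeq t t' → Aeq (.lam t) (.lam t')
  | appCongr : Aeq t t' → Aeq u u' → Aeq (.app t u) (.app t' u')
  | addCongr : Aeq t t' → Aeq u u' → Aeq (.add t u) (.add t' u')

/-- One-step reduction (the five rewrite rules plus β, closed under all
contexts, and performed modulo the AC-equivalence of terms). -/
inductive Step : Tm → Tm → Prop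
  | distrRight (t u s : Tm) : Step (.app (.add t u) s) (.add (.app t s) (.app u s))
  | distrLeft (t u s : Tm) : Step (.app t (.add u s)) (.add (.app t u) (.app t s))
  | zeroApp (t : Tm) : Step (.app .zero t) .zero
  | appZero (t : Tm) : Step (.app t .zero) .zero
  | addZero (t : Tm) : Step (.add t .zero) t
  | beta (t v : Tm) : IsValue v → Step (.app (.lam t) v) (Tm.subst 0 v t)
  | appLeft : Step t t' → Step (.app t u) (.app t' u)
  | appRight : Step u u' → Step (.app t u) (.app t u')
  | addLeft : Step t t' → Step (.add t u) (.add t' u)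
  | addRight : Step u u' → Step (.add t u) (.add t u')
  | lamCongr : Step t t' → Step (.lam t) (.lam t')
  | ac : Aeq t t' → Step t' u' → Aeq u' u → Step t u

/-- Strong normalisation of a term: accessibility of the inverse reduction. -/
def SN (t : Tm) : Prop := Acc (fun a b => Step b a) t

/-- The set of strongly normalising closed terms. -/
def SNset : Set Tm := {t | Closed t ∧ SN t}

/-- Pseudo-values: abstractions and sums of pseudo-values. -/
inductive PseudoValue : Tm → Prop
  | lam (t : Tm) : PseudoValue (.lam t)
  | add : PseudoValue t → PseudoValue u → PseudoValue (.add t u)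

/-- Neutral terms: closed terms that are not pseudo-values. -/
def Neutral (t : Tm) : Prop := Closed t ∧ ¬ PseudoValue t

/-- The set of one-step reducts of `t`. -/
def Red (t : Tm) : Set Tm := {u | Step t u}

/-- The set of reducts (in any number of steps, including zero) of terms of `S`. -/
def RedStar (S : Set Tm) : Set Tm := {u | ∃ t ∈ S, Relation.ReflTransGen Step t u}

/-- The closure of a set of terms under (CR3). -/
inductive Clo (S : Set Tm) : Tm → Prop
  | base {t : Tm} : t ∈ S → Clo S t
  | step {t : Tm} : Neutral t → (∀ u, Step t u → Clo S u) → Clo S t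

/-- `clo S`: the least set containing `S` and closed under (CR3). -/
def clo (S : Set Tm) : Set Tm := {t | Clo S t}

/-- Reducibility candidates. -/
structure IsCandidate (A : Set Tm) : Prop where
  cr1 : A ⊆ SNset
  cr2 : ∀ t ∈ A, Red t ⊆ A
  cr3 : ∀ t, Neutral t → Red t ⊆ A → t ∈ A

/-- The arrow operator on sets of closed terms. -/
def CArrow (A B : Set Tm) : Set Tm := {t | Closed t ∧ ∀ u ∈ A, Tm.app t u ∈ B}

/-- The sum of two sets of (AC-classes of) terms. -/
def CSum (A B : Set Tm) : Set Tm := {s | ∃ t ∈ A, ∃ u ∈ B, Aeq s (Tm.add t u)}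

/-- The ⊞ operator on reducibility candidates. -/
def CPlus (A B : Set Tm) : Set Tm := clo (CSum A B ∪ A ∪ B)

/-! ## Types of the Add type system -/

mutual
  /-- Unit types. -/
  inductive UTy : Type
    | var : ℕ → UTy
    | arrow : UTy → Ty → UTy
    | all : UTy → UTy

  /-- Types. -/
  inductive Ty : Type
    | unit : UTy → Ty
    | add : Ty → Ty → Ty
    | zero : Ty
end

mutual
  /-- Shifting of type variables in unit types. -/
  def UTy.shift (d c : ℕ) : UTy → UTy
    | .var n => if n < c then .var n else .var (n + d)
    | .arrow U T => .arrow (UTy.shift d c U) (Ty.shift d c T)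
    | .all U => .all (UTy.shift d (c + 1) U)

  /-- Shifting of type variables in types. -/
  def Ty.shift (d c : ℕ) : Ty → Ty
    | .unit U => .unit (UTy.shift d c U)
    | .add T R => .add (Ty.shift d c T) (Ty.shift d c R)
    | .zero => .zero
end

mutual
  /-- Substitution of the (bound) type variable `k` by `V` in a unit type. -/
  def UTy.subst (k : ℕ) (V : UTy) : UTy → UTy
    | .var n => if n = k then UTy.shift k 0 V else if k < n then .var (n - 1) else .var n
    | .arrow U T => .arrow (UTy.subst k V U) (Ty.subst k V T)
    | .all U => .all (UTy.subst (k + 1) V U)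

  /-- Substitution of the (bound) type variable `k` by `V` in a type. -/
  def Ty.subst (k : ℕ) (V : UTy) : Ty → Ty
    | .unit U => .unit (UTy.subst k V U)
    | .add T R => .add (Ty.subst k V T) (Ty.subst k V R)
    | .zero => .zero
end

/-- Iterated substitution `U[V⃗/X⃗]` for a unit type under `|Vs|` quantifiers. -/
def UTy.msubst (Vs : List UTy) (U : UTy) : UTy := Vs.foldl (fun A V => UTy.subst 0 V A) U

/-- Iterated substitution `T[V⃗/X⃗]` for a type under `|Vs|` quantifiers. -/
def Ty.msubst (Vs : List UTy) (T : Ty) : Ty := Vs.foldl (fun A V => Ty.subst 0 V A) T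

mutual
  /-- Substitution of the free type variable `X` (seen at depth `c`) by `V` in a unit type. -/
  def UTy.replAux (X : ℕ) (V : UTy) (c : ℕ) : UTy → UTy
    | .var n => if n = X + c then UTy.shift c 0 V else .var n
    | .arrow U T => .arrow (UTy.replAux X V c U) (Ty.replAux X V c T)
    | .all U => .all (UTy.replAux X V (c + 1) U)

  /-- Substitution of the free type variable `X` (seen at depth `c`) by `V` in a type. -/
  def Ty.replAux (X : ℕ) (V : UTy) (c : ℕ) : Ty → Ty
    | .unit U => .unit (UTy.replAux X V c U)
    | .add T R => .add (Ty.replAux X V c T) (Ty.replAux X V c R)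
    | .zero => .zero
end

/-- Capture-avoiding substitution `U[V/X]` of a free type variable. -/
def UTy.repl (X : ℕ) (V : UTy) (U : UTy) : UTy := UTy.replAux X V 0 U

/-- Capture-avoiding substitution `T[V/X]` of a free type variable. -/
def Ty.repl (X : ℕ) (V : UTy) (T : Ty) : Ty := Ty.replAux X V 0 T

mutual
  /-- Abstraction of the free type variable `X` (at depth `c`), used to form `∀X.U`. -/
  def UTy.absAux (X c : ℕ) : UTy → UTy
    | .var n => if n = X + c then .var c else if c ≤ n then .var (n + 1) else .var n
    | .arrow U T => .arrow (UTy.absAux X c U) (Ty.absAux X c T)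
    | .all U => .all (UTy.absAux X (c + 1) U)

  /-- Abstraction of the free type variable `X` (at depth `c`) in a type. -/
  def Ty.absAux (X c : ℕ) : Ty → Ty
    | .unit U => .unit (UTy.absAux X c U)
    | .add T R => .add (Ty.absAux X c T) (Ty.absAux X c R)
    | .zero => .zero
end

/-- `∀X.U`: universal quantification of the free type variable `X` in `U`. -/
def UTy.genAll (X : ℕ) (U : UTy) : UTy := .all (UTy.absAux X 0 U)

mutual
  /-- `X` occurs free in a unit type. -/
  def UTy.Free (n : ℕ) : UTy → Prop
    | .var m => m = n
    | .arrow U T => UTy.Free n U ∨ Ty.Free n T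
    | .all U => UTy.Free (n + 1) U

  /-- `X` occurs free in a type. -/
  def Ty.Free (n : ℕ) : Ty → Prop
    | .unit U => UTy.Free n U
    | .add T R => Ty.Free n T ∨ Ty.Free n R
    | .zero => False
end

mutual
  /-- Equivalence of unit types (the least congruence making `+` on types
  associative, commutative, with neutral element `𝟘`). -/
  inductive UEq : UTy → UTy → Prop
    | refl (U : UTy) : UEq U U
    | symm : UEq U V → UEq V U
    | trans : UEq U V → UEq V W → UEq U W
    | arrow : UEq U U' → TEq T T' → UEq (.arrow U T) (.arrow U' T')
    | all : UEq U U' → UEq (.all U) (.all U')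

  /-- Equivalence of types: the least congruence such that
  `T+R ≡ R+T`, `T+(R+S) ≡ (T+R)+S` and `T+𝟘 ≡ T`. -/
  inductive TEq : Ty → Ty → Prop
    | refl (T : Ty) : TEq T T
    | symm : TEq T R → TEq R T
    | trans : TEq T R → TEq R S → TEq T S
    | unit : UEq U U' → TEq (.unit U) (.unit U')
    | addCongr : TEq T T' → TEq R R' → TEq (.add T R) (.add T' R')
    | comm (T R : Ty) : TEq (.add T R) (.add R T)
    | assoc (T R S : Ty) : TEq (.add T (.add R S)) (.add (.add T R) S)
    | zero (T : Ty) : TEq (.add T .zero) T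
end

/-- `Σ_{i} T_i`, with the empty sum being `𝟘`. -/
def sumT (Ts : List Ty) : Ty := Ts.foldl Ty.add Ty.zero

/-- `∀X₁.…∀X_k.U`. -/
def allN : ℕ → UTy → UTy
  | 0, U => U
  | k + 1, U => .all (allN k U)

/-- Lifting of type variables in a typing context (for ∀-introduction). -/
def liftCtx (Γ : List UTy) : List UTy := Γ.map (UTy.shift 1 0)

/-! ## The Add type system -/

/-- Typing judgements of the Add type system. -/
inductive Typing : List UTy → Tm → Ty → Prop
  | ax {Γ : List UTy} {n : ℕ} {U : UTy} : Γ[n]? = some U → Typing Γ (.var n) (.unit U)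
  | axZero {Γ : List UTy} : Typing Γ .zero .zero
  | equiv {Γ t T R} : Typing Γ t T → TEq T R → Typing Γ t R
  | arrI {Γ U t T} : Typing (U :: Γ) t T → Typing Γ (.lam t) (.unit (.arrow U T))
  | arrE {Γ t u} {k : ℕ} {U : UTy} {Ts : List Ty} {Vs : List (List UTy)} :
      Ts ≠ [] → Vs ≠ [] → (∀ V ∈ Vs, V.length = k) →
      Typing Γ t (sumT (Ts.map fun Ti => .unit (allN k (.arrow U Ti)))) →
      Typing Γ u (sumT (Vs.map fun Vj => .unit (UTy.msubst Vj U))) →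
      Typing Γ (.app t u)
        (sumT ((Ts.map fun Ti => Vs.map fun Vj => Ty.msubst Vj Ti).flatten))
  | addI {Γ t u T R} : Typing Γ t T → Typing Γ u R → Typing Γ (.add t u) (.add T R)
  | allE {Γ t U} (V : UTy) : Typing Γ t (.unit (.all U)) → Typing Γ t (.unit (UTy.subst 0 V U))
  | allI {Γ t U} : Typing (liftCtx Γ) t (.unit U) → Typing Γ t (.unit (.all U))

/-! ## Interpretation of types by reducibility candidates -/

/-- Extension of a valuation. -/
def consV (A : Set Tm) (ρ : ℕ → Set Tm) : ℕ → Set Tm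
  | 0 => A
  | n + 1 => ρ n

mutual
  /-- Interpretation of unit types. -/
  def interpU : UTy → (ℕ → Set Tm) → Set Tm
    | .var n, ρ => ρ n
    | .arrow U T, ρ => CArrow (interpU U ρ) (interpT T ρ)
    | .all U, ρ => {t | ∀ A : Set Tm, IsCandidate A → t ∈ interpU U (consV A ρ)}

  /-- Interpretation of types. -/
  def interpT : Ty → (ℕ → Set Tm) → Set Tm
    | .unit U, ρ => interpU U ρ
    | .add T R, ρ => CPlus (interpT T ρ) (interpT R ρ)
    | .zero, _ => clo ∅
end

/-- Lifting of a simultaneous substitution under a binder. -/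
def liftSub (σ : ℕ → Tm) : ℕ → Tm
  | 0 => .var 0
  | n + 1 => Tm.shift 1 0 (σ n)

/-- Simultaneous substitution `t_σ` of all free term variables of `t`. -/
def Tm.msubst (σ : ℕ → Tm) : Tm → Tm
  | .var n => σ n
  | .lam t => .lam (Tm.msubst (liftSub σ) t)
  | .app t u => .app (Tm.msubst σ t) (Tm.msubst σ u)
  | .add t u => .add (Tm.msubst σ t) (Tm.msubst σ u)
  | .zero => .zero

/-! ## The relations ⋖ and ≼ on types -/

/-- The relation `⋖` on unit types: `U₁ ⋖ U₂` iff either `U₂ ≡ ∀X.U₁`, or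
`U₁ ≡ ∀X.U'` and `U₂ ≡ U'[V/X]`. -/
inductive SSub : UTy → UTy → Prop
  | gen {U₁ U₂ : UTy} (X : ℕ) : UEq U₂ (UTy.genAll X U₁) → SSub U₁ U₂
  | inst {U₁ U₂ : UTy} (U' V : UTy) : UEq U₁ (.all U') → UEq U₂ (UTy.subst 0 V U') →
      SSub U₁ U₂

/-- The relation `≼`: the reflexive (with respect to `≡`) and transitive
closure of `⋖`, on types. -/
inductive TPre : Ty → Ty → Prop
  | ofEq : TEq T T' → TPre T T'
  | ofSSub {U V : UTy} : SSub U V → TPre (.unit U) (.unit V)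
  | trans : TPre T T' → TPre T' T'' → TPre T T''

/-! ## Trees and the structured type system Add_struct -/

/-- Binary trees with two kinds of leaves: `ℓ`-leaves and `𝟘`-leaves. -/
inductive ATree : Type
  | leaf : ATree
  | zleaf : ATree
  | node : ATree → ATree → ATree
  deriving DecidableEq

namespace ATree

/-- ATree composition: branch a copy of `A'` at each `ℓ`-leaf of `A`. -/
def comp : ATree → ATree → ATree
  | .leaf, A' => A'
  | .zleaf, _ => .zleaf
  | .node A B, A' => .node (comp A A') (comp B A')

/-- `LeafAt A w`: the word `w` (over `{l,r}`, here `{false,true}`) is the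
address of an `ℓ`-leaf of `A`. -/
inductive LeafAt : ATree → List Bool → Prop
  | leaf : LeafAt .leaf []
  | left {A B w} : LeafAt A w → LeafAt (.node A B) (false :: w)
  | right {A B w} : LeafAt B w → LeafAt (.node A B) (true :: w)

/-- Labelling of the `ℓ`-leaves of a tree by unit types, yielding a type. -/
def labelU : ATree → (List Bool → UTy) → Ty
  | .leaf, f => .unit (f [])
  | .zleaf, _ => .zero
  | .node A B, f => .add (labelU A fun w => f (false :: w)) (labelU B fun w => f (true :: w))

/-- Labelling of the `ℓ`-leaves of a tree by types, yielding a type. -/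
def labelT : ATree → (List Bool → Ty) → Ty
  | .leaf, f => f []
  | .zleaf, _ => .zero
  | .node A B, f => .add (labelT A fun w => f (false :: w)) (labelT B fun w => f (true :: w))

/-- Split an address of a leaf of `A ∘ A'` into the `A`-part and the `A'`-part. -/
def split : ATree → List Bool → List Bool × List Bool
  | .leaf, p => ([], p)
  | .zleaf, p => ([], p)
  | .node A _, false :: p => ((split A p).1.cons false, (split A p).2)
  | .node _ B, true :: p => ((split B p).1.cons true, (split B p).2)
  | .node _ _, [] => ([], [])

end ATree

/-- Typing derivations of the structured type system Add_struct. -/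
inductive SDeriv : List UTy → Tm → Ty → Type
  | ax (Γ : List UTy) (n : ℕ) (U : UTy) (h : Γ[n]? = some U) : SDeriv Γ (.var n) (.unit U)
  | axZero (Γ : List UTy) : SDeriv Γ .zero .zero
  | arrI {Γ U t T} (D : SDeriv (U :: Γ) t T) : SDeriv Γ (.lam t) (.unit (.arrow U T))
  | addI {Γ t u T R} (D₁ : SDeriv Γ t T) (D₂ : SDeriv Γ u R) :
      SDeriv Γ (.add t u) (.add T R)
  | allE {Γ t U} (V : UTy) (D : SDeriv Γ t (.unit (.all U))) :
      SDeriv Γ t (.unit (UTy.subst 0 V U))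
  | allI {Γ t U} (D : SDeriv (liftCtx Γ) t (.unit U)) : SDeriv Γ t (.unit (.all U))
  | arrE {Γ t u} (A A' : ATree) (k : ℕ) (U : UTy) (Tf : List Bool → Ty)
      (Vf : List Bool → List UTy)
      (hlen : ∀ v, A'.LeafAt v → (Vf v).length = k)
      (D₁ : SDeriv Γ t (A.labelU fun w => allN k (.arrow U (Tf w))))
      (D₂ : SDeriv Γ u (A'.labelU fun v => UTy.msubst (Vf v) U)) :
      SDeriv Γ (.app t u)
        ((A.comp A').labelT fun p => Ty.msubst (Vf (A.split p).2) (Tf (A.split p).1))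

/-! ## System F with pairs -/

/-- Terms of System F with pairs. -/
inductive FTm : Type
  | var : ℕ → FTm
  | lam : FTm → FTm
  | app : FTm → FTm → FTm
  | star : FTm
  | pair : FTm → FTm → FTm
  | pl : FTm → FTm
  | pr : FTm → FTm
  deriving DecidableEq

/-- Types of System F with pairs. -/
inductive FTy : Type
  | var : ℕ → FTy
  | arrow : FTy → FTy → FTy
  | all : FTy → FTy
  | one : FTy
  | prod : FTy → FTy → FTy
  deriving DecidableEq

/-- Shifting of term variables in F-terms. -/
def FTm.shift (d c : ℕ) : FTm → FTm
  | .var n => if n < c then .var n else .var (n + d)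
  | .lam t => .lam (FTm.shift d (c + 1) t)
  | .app t u => .app (FTm.shift d c t) (FTm.shift d c u)
  | .star => .star
  | .pair t u => .pair (FTm.shift d c t) (FTm.shift d c u)
  | .pl t => .pl (FTm.shift d c t)
  | .pr t => .pr (FTm.shift d c t)

/-- Substitution of the term variable `k` by `v` in an F-term. -/
def FTm.subst (k : ℕ) (v : FTm) : FTm → FTm
  | .var n => if n = k then FTm.shift k 0 v else if k < n then .var (n - 1) else .var n
  | .lam t => .lam (FTm.subst (k + 1) v t)
  | .app t u => .app (FTm.subst k v t) (FTm.subst k v u)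
  | .star => .star
  | .pair t u => .pair (FTm.subst k v t) (FTm.subst k v u)
  | .pl t => .pl (FTm.subst k v t)
  | .pr t => .pr (FTm.subst k v t)

/-- Shifting of type variables in F-types. -/
def FTy.shift (d c : ℕ) : FTy → FTy
  | .var n => if n < c then .var n else .var (n + d)
  | .arrow A B => .arrow (FTy.shift d c A) (FTy.shift d c B)
  | .all A => .all (FTy.shift d (c + 1) A)
  | .one => .one
  | .prod A B => .prod (FTy.shift d c A) (FTy.shift d c B)

/-- Substitution of the type variable `k` by `B` in an F-type. -/
def FTy.subst (k : ℕ) (B : FTy) : FTy → FTy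
  | .var n => if n = k then FTy.shift k 0 B else if k < n then .var (n - 1) else .var n
  | .arrow A A' => .arrow (FTy.subst k B A) (FTy.subst k B A')
  | .all A => .all (FTy.subst (k + 1) B A)
  | .one => .one
  | .prod A A' => .prod (FTy.subst k B A) (FTy.subst k B A')

/-- One-step reduction in System F with pairs. -/
inductive FStep : FTm → FTm → Prop
  | beta (t u : FTm) : FStep (.app (.lam t) u) (FTm.subst 0 u t)
  | plPair (t u : FTm) : FStep (.pl (.pair t u)) t
  | prPair (t u : FTm) : FStep (.pr (.pair t u)) u
  | eta (t : FTm) : FStep (.lam (.app (FTm.shift 1 0 t) (.var 0))) t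
  | sp (p : FTm) : FStep (.pair (.pl p) (.pr p)) p
  | lamCongr : FStep t t' → FStep (.lam t) (.lam t')
  | appLeft : FStep t t' → FStep (.app t u) (.app t' u)
  | appRight : FStep u u' → FStep (.app t u) (.app t u')
  | pairLeft : FStep t t' → FStep (.pair t u) (.pair t' u)
  | pairRight : FStep u u' → FStep (.pair t u) (.pair t u')
  | plCongr : FStep t t' → FStep (.pl t) (.pl t')
  | prCongr : FStep t t' → FStep (.pr t) (.pr t')

/-- Typing in System F with pairs. -/
inductive FTyping : List FTy → FTm → FTy → Prop
  | ax {Γ n A} : Γ[n]? = some A → FTyping Γ (.var n) A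
  | star {Γ} : FTyping Γ .star .one
  | lam {Γ A t B} : FTyping (A :: Γ) t B → FTyping Γ (.lam t) (.arrow A B)
  | app {Γ t u A B} : FTyping Γ t (.arrow A B) → FTyping Γ u A → FTyping Γ (.app t u) B
  | pair {Γ t u A B} : FTyping Γ t A → FTyping Γ u B → FTyping Γ (.pair t u) (.prod A B)
  | pl {Γ t A B} : FTyping Γ t (.prod A B) → FTyping Γ (.pl t) A
  | pr {Γ t A B} : FTyping Γ t (.prod A B) → FTyping Γ (.pr t) B
  | allI {Γ t A} : FTyping (Γ.map (FTy.shift 1 0)) t A → FTyping Γ t (.all A)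
  | allE {Γ t A} (B : FTy) : FTyping Γ t (.all A) → FTyping Γ t (FTy.subst 0 B A)

/-! ## The translation from Add_struct into System F with pairs -/

mutual
  /-- Translation of unit types into F-types. -/
  def transU : UTy → FTy
    | .var n => .var n
    | .arrow U T => .arrow (transU U) (transT T)
    | .all U => .all (transU U)

  /-- Translation of Add types into F-types. -/
  def transT : Ty → FTy
    | .unit U => transU U
    | .add T R => .prod (transT T) (transT R)
    | .zero => .one
end

/-- Labelling of the `ℓ`-leaves of a tree by F-terms (pairs at the nodes, `⋆`
at the `𝟘`-leaves), yielding an F-term. -/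
def ATree.labelF : ATree → (List Bool → FTm) → FTm
  | .leaf, f => f []
  | .zleaf, _ => .star
  | .node A B, f => .pair (ATree.labelF A fun w => f (false :: w))
      (ATree.labelF B fun w => f (true :: w))

/-- `π_{w̄}(t)`: the composite of projections along the mirror of the word `w`. -/
def projMirror (w : List Bool) (t : FTm) : FTm :=
  w.foldl (fun s b => if b then .pr s else .pl s) t

/-- The translation `|t|_D` of a term typed in Add_struct by a derivation `D`
into an F-term. -/
def transD : ∀ {Γ : List UTy} {t : Tm} {T : Ty}, SDeriv Γ t T → FTm
  | _, _, _, .ax _ n _ _ => .var n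
  | _, _, _, .axZero _ => .star
  | _, _, _, .arrI D => .lam (transD D)
  | _, _, _, .addI D₁ D₂ => .pair (transD D₁) (transD D₂)
  | _, _, _, .allE _ D => transD D
  | _, _, _, .allI D => transD D
  | _, _, _, .arrE A A' _ _ _ _ _ D₁ D₂ =>
      (A.comp A').labelF fun p =>
        .app (projMirror (A.split p).1 (transD D₁)) (projMirror (A.split p).2 (transD D₂))

/-! ## Structural reduction (without AC and without the rule `t+𝟎 → t`) -/

/-- One-step reduction by a rule other than `t+𝟎 → t` (and not using the
AC-equivalence, which is absent from Add_struct). -/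
inductive SStep : Tm → Tm → Prop
  | distrRight (t u s : Tm) : SStep (.app (.add t u) s) (.add (.app t s) (.app u s))
  | distrLeft (t u s : Tm) : SStep (.app t (.add u s)) (.add (.app t u) (.app t s))
  | zeroApp (t : Tm) : SStep (.app .zero t) .zero
  | appZero (t : Tm) : SStep (.app t .zero) .zero
  | beta (t v : Tm) : IsValue v → SStep (.app (.lam t) v) (Tm.subst 0 v t)
  | appLeft : SStep t t' → SStep (.app t u) (.app t' u)
  | appRight : SStep u u' → SStep (.app t u) (.app t u')
  | addLeft : SStep t t' → SStep (.add t u) (.add t' u)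
  | addRight : SStep u u' → SStep (.add t u) (.add t u')
  | lamCongr : SStep t t' → SStep (.lam t) (.lam t')

/-! ## The partial inverse translation -/

/-- Partial inverse translation on types. -/
def invTy : FTy → Option Ty
  | .var n => some (.unit (.var n))
  | .one => some .zero
  | .all A =>
    match invTy A with
    | some (.unit U) => some (.unit (.all U))
    | _ => none
  | .prod A B =>
    match invTy A, invTy B with
    | some T, some R => some (.add T R)
    | _, _ => none
  | .arrow A B =>
    match invTy A, invTy B with
    | some (.unit U), some T => some (.unit (.arrow U T))
    | _, _ => none

/-- An F-term of the shape `A[wv ↦ π_{w̄}(t) π_{v̄}(u)]` for a non-trivial tree. -/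
def IsTreeApp (s : FTm) : Prop :=
  ∃ (A A' : ATree) (t u : FTm), A.comp A' ≠ .leaf ∧ A.comp A' ≠ .zleaf ∧
    s = (A.comp A').labelF fun p =>
      .app (projMirror (A.split p).1 t) (projMirror (A.split p).2 u)

/-- The partial inverse translation on F-terms, as a relation. -/
inductive InvTm : FTm → Tm → Prop
  | var (n : ℕ) : InvTm (.var n) (.var n)
  | star : InvTm .star .zero
  | lam : InvTm t t' → InvTm (.lam t) (.lam t')
  | app : InvTm t t' → InvTm u u' → InvTm (.app t u) (.app t' u')
  | treeApp (A A' : ATree) {t u : FTm} {t' u' : Tm} :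
      A.comp A' ≠ .leaf → A.comp A' ≠ .zleaf → InvTm t t' → InvTm u u' →
      InvTm ((A.comp A').labelF fun p =>
          .app (projMirror (A.split p).1 t) (projMirror (A.split p).2 u))
        (.app t' u')
  | pair : ¬ IsTreeApp (.pair t u) → InvTm t t' → InvTm u u' →
      InvTm (.pair t u) (.add t' u')

/-! ### Auxiliary development for the strong normalisation proof -/

namespace SNProof

/-- The multiset of atomic summands of a term. -/
def ms : Tm → Multiset Tm
  | .var n => {.var n}
  | .lam t => {.lam t}
  | .app t u => {.app t u}
  | .zero => {.zero}
  | .add t u => ms t + ms u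

lemma ms_card_pos (t : Tm) : 0 < (ms t).card := by
  induction t with
  | add t u iht ihu => simp only [ms, Multiset.card_add]; omega
  | var n => simp [ms]
  | lam t ih => simp [ms]
  | app t u iht ihu => simp [ms]
  | zero => simp [ms]

lemma ms_ne_zero (t : Tm) : ms t ≠ 0 := by
  intro h
  have := ms_card_pos t
  rw [h] at this; simp at this

lemma ms_atom {t : Tm} (h : ∀ a b, t ≠ .add a b) : ms t = {t} := by
  cases t with
  | add a b => exact absurd rfl (h a b)
  | var n => rfl
  | lam t => rfl
  | app t u => rfl
  | zero => rfl

lemma ms_singleton : ∀ {t b : Tm}, ms t = {b} → t = b := by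
  intro t b h
  cases t with
  | add a b' =>
    have h1 := ms_card_pos a
    have h2 := ms_card_pos b'
    have : (ms (Tm.add a b')).card = 1 := by rw [h]; rfl
    simp only [ms, Multiset.card_add] at this
    omega
  | var n => simpa [ms] using h
  | lam t => simpa [ms] using h
  | app t u => simpa [ms] using h
  | zero => simpa [ms] using h

/-! #### Inversion of `Aeq` along head constructors -/

/-- Shape invariant preserved by `Aeq`. -/
def shapeInv : Tm → Tm → Prop
  | .var n, u => u = .var n
  | .zero, u => u = .zero
  | .lam t, u => ∃ t', u = .lam t' ∧ Aeq t t'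
  | .app t s, u => ∃ t' s', u = .app t' s' ∧ Aeq t t' ∧ Aeq s s'
  | .add _ _, u => ∃ a b, u = .add a b

lemma shapeInv_refl (t : Tm) : shapeInv t t := by
  cases t with
  | var n => rfl
  | zero => rfl
  | lam t => exact ⟨t, rfl, Aeq.refl t⟩
  | app t s => exact ⟨t, s, rfl, Aeq.refl t, Aeq.refl s⟩
  | add a b => exact ⟨a, b, rfl⟩

lemma aeq_shape : ∀ {t u : Tm}, Aeq t u → shapeInv t u ∧ shapeInv u t := by
  intro t u h
  induction h with
  | refl t => exact ⟨shapeInv_refl t, shapeInv_refl t⟩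
  | symm _ ih => exact ⟨ih.2, ih.1⟩
  | trans _ _ ih1 ih2 =>
    rename_i t u s _ _
    constructor
    · -- shapeInv t s
      cases t with
      | var n => obtain h1 := ih1.1; subst h1; exact ih2.1
      | zero => obtain h1 := ih1.1; subst h1; exact ih2.1
      | lam t0 =>
        obtain ⟨t', rfl, ha⟩ := ih1.1
        obtain ⟨t'', rfl, hb⟩ := ih2.1
        exact ⟨t'', rfl, ha.trans hb⟩
      | app t0 s0 =>
        obtain ⟨t', s', rfl, ha1, ha2⟩ := ih1.1
        obtain ⟨t'', s'', rfl, hb1, hb2⟩ := ih2.1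
        exact ⟨t'', s'', rfl, ha1.trans hb1, ha2.trans hb2⟩
      | add a b =>
        obtain ⟨a', b', rfl⟩ := ih1.1
        obtain ⟨a'', b'', rfl⟩ := ih2.1
        exact ⟨a'', b'', rfl⟩
    · -- shapeInv s t
      cases s with
      | var n => obtain h1 := ih2.2; subst h1; exact ih1.2
      | zero => obtain h1 := ih2.2; subst h1; exact ih1.2
      | lam s0 =>
        obtain ⟨t', rfl, ha⟩ := ih2.2
        obtain ⟨t'', rfl, hb⟩ := ih1.2
        exact ⟨t'', rfl, ha.trans hb⟩
      | app t0 s0 =>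
        obtain ⟨t', s', rfl, ha1, ha2⟩ := ih2.2
        obtain ⟨t'', s'', rfl, hb1, hb2⟩ := ih1.2
        exact ⟨t'', s'', rfl, ha1.trans hb1, ha2.trans hb2⟩
      | add a b =>
        obtain ⟨a', b', rfl⟩ := ih2.2
        obtain ⟨a'', b'', rfl⟩ := ih1.2
        exact ⟨a'', b'', rfl⟩
  | comm t u => exact ⟨⟨u, t, rfl⟩, ⟨t, u, rfl⟩⟩
  | assoc t u s => exact ⟨⟨_, _, rfl⟩, ⟨_, _, rfl⟩⟩
  | lamCongr h ih => exact ⟨⟨_, rfl, h⟩, ⟨_, rfl, h.symm⟩⟩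
  | appCongr h1 h2 ih1 ih2 =>
    exact ⟨⟨_, _, rfl, h1, h2⟩, ⟨_, _, rfl, h1.symm, h2.symm⟩⟩
  | addCongr h1 h2 ih1 ih2 => exact ⟨⟨_, _, rfl⟩, ⟨_, _, rfl⟩⟩

lemma aeq_var {n : ℕ} {u : Tm} (h : Aeq (.var n) u) : u = .var n := (aeq_shape h).1
lemma aeq_zero {u : Tm} (h : Aeq .zero u) : u = .zero := (aeq_shape h).1
lemma aeq_lam {t : Tm} {u : Tm} (h : Aeq (.lam t) u) : ∃ t', u = .lam t' ∧ Aeq t t' :=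
  (aeq_shape h).1
lemma aeq_app {t s u : Tm} (h : Aeq (.app t s) u) :
    ∃ t' s', u = .app t' s' ∧ Aeq t t' ∧ Aeq s s' := (aeq_shape h).1
lemma aeq_add {a b u : Tm} (h : Aeq (.add a b) u) : ∃ c d, u = .add c d := (aeq_shape h).1

lemma isValue_aeq {v u : Tm} (hv : IsValue v) (h : Aeq v u) : IsValue u := by
  cases hv with
  | var n => rw [aeq_var h]; exact .var n
  | lam t => obtain ⟨t', rfl, _⟩ := aeq_lam h; exact .lam t'

/-! #### Multiset relation utilities -/

lemma rel_refl (M : Multiset Tm) : Multiset.Rel Aeq M M := by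
  induction M using Multiset.induction with
  | empty => exact Multiset.Rel.zero
  | cons a s ih => exact Multiset.Rel.cons (Aeq.refl a) ih

lemma rel_symm : ∀ {M N : Multiset Tm}, Multiset.Rel Aeq M N → Multiset.Rel Aeq N M := by
  intro M N h
  induction h with
  | zero => exact Multiset.Rel.zero
  | cons h _ ih => exact Multiset.Rel.cons h.symm ih

lemma rel_trans : ∀ {M N P : Multiset Tm},
    Multiset.Rel Aeq M N → Multiset.Rel Aeq N P → Multiset.Rel Aeq M P := by
  intro M N P h1
  induction h1 generalizing P with
  | zero => intro h2; rwa [Multiset.rel_zero_left] at h2 ⊢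
  | @cons x y as bs hxy _ ih =>
    intro h2
    rw [Multiset.rel_cons_left] at h2
    obtain ⟨z, cs, hyz, hbc, rfl⟩ := h2
    exact Multiset.Rel.cons (hxy.trans hyz) (ih hbc)

/-- Choose a partner of an element across a `Rel`. -/
lemma rel_partner {M N : Multiset Tm} (h : Multiset.Rel Aeq M N) {b : Tm} (hb : b ∈ N) :
    ∃ a ∈ M, Aeq a b ∧ Multiset.Rel Aeq (M.erase a) (N.erase b) := by
  rw [← Multiset.cons_erase hb] at h
  rw [Multiset.rel_cons_right] at h
  obtain ⟨a, as', hab, hrel, rfl⟩ := h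
  exact ⟨a, Multiset.mem_cons_self a as', hab, by rwa [Multiset.erase_cons_head]⟩

lemma aeq_ms : ∀ {t u : Tm}, Aeq t u → Multiset.Rel Aeq (ms t) (ms u) := by
  intro t u h
  induction h with
  | refl t => exact rel_refl _
  | symm _ ih => exact rel_symm ih
  | trans _ _ ih1 ih2 => exact rel_trans ih1 ih2
  | comm t u => simp only [ms]; rw [add_comm]; exact rel_refl _
  | assoc t u s => simp only [ms]; rw [add_assoc]; exact rel_refl _
  | lamCongr h _ => exact Multiset.Rel.cons (Aeq.lamCongr h) Multiset.Rel.zero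
  | appCongr h1 h2 _ _ => exact Multiset.Rel.cons (Aeq.appCongr h1 h2) Multiset.Rel.zero
  | addCongr _ _ ih1 ih2 => exact Multiset.Rel.add ih1 ih2

end SNProof
namespace SNProof

/-! #### Splitting sums according to multiset decompositions -/

lemma riesz {A B M₁ M₂ : Multiset Tm} (h : A + B = M₁ + M₂) :
    ∃ N₁₁ N₁₂ N₂₁ N₂₂ : Multiset Tm,
      A = N₁₁ + N₁₂ ∧ B = N₂₁ + N₂₂ ∧ M₁ = N₁₁ + N₂₁ ∧ M₂ = N₁₂ + N₂₂ := by
  refine ⟨A ∩ M₁, A - A ∩ M₁, M₁ - A ∩ M₁, B - (M₁ - A ∩ M₁), ?_, ?_, ?_, ?_⟩ <;>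
  · ext x
    have hc := congrArg (Multiset.count x) h
    simp only [Multiset.count_add, Multiset.count_sub, Multiset.count_inter] at *
    omega

lemma rel_singleton_left {x : Tm} {N : Multiset Tm} (h : Multiset.Rel Aeq {x} N) :
    ∃ b, N = {b} ∧ Aeq x b := by
  have : Multiset.Rel Aeq (x ::ₘ 0) N := h
  rw [Multiset.rel_cons_left] at this
  obtain ⟨b, bs', hab, hrel, rfl⟩ := this
  rw [Multiset.rel_zero_left] at hrel
  subst hrel
  exact ⟨b, rfl, hab⟩

lemma aeq_medial (a₁ a₂ b₁ b₂ : Tm) :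
    Aeq (.add (.add a₁ a₂) (.add b₁ b₂)) (.add (.add a₁ b₁) (.add a₂ b₂)) := by
  have h1 : Aeq (Tm.add (.add a₁ a₂) (.add b₁ b₂)) (.add a₁ (.add a₂ (.add b₁ b₂))) :=
    (Aeq.assoc _ _ _).symm
  have h2 : Aeq (Tm.add a₂ (.add b₁ b₂)) (.add b₁ (.add a₂ b₂)) := by
    have : Aeq (Tm.add a₂ (.add b₁ b₂)) (.add (.add a₂ b₁) b₂) := Aeq.assoc _ _ _
    refine this.trans ?_
    have : Aeq (Tm.add (.add a₂ b₁) b₂) (.add (.add b₁ a₂) b₂) :=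
      Aeq.addCongr (Aeq.comm _ _) (Aeq.refl _)
    exact this.trans (Aeq.assoc _ _ _).symm
  exact (h1.trans (Aeq.addCongr (Aeq.refl _) h2)).trans (Aeq.assoc _ _ _)

lemma exists_split : ∀ (y : Tm) {M₁ M₂ : Multiset Tm}, ms y = M₁ + M₂ → M₁ ≠ 0 → M₂ ≠ 0 →
    ∃ y₁ y₂, Aeq y (.add y₁ y₂) ∧ ms y₁ = M₁ ∧ ms y₂ = M₂ := by
  intro y
  induction y with
  | var n =>
    intro M₁ M₂ h h1 h2
    exfalso
    have : ({Tm.var n} : Multiset Tm).card = (M₁ + M₂).card := by rw [← h]; rfl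
    simp only [Multiset.card_singleton, Multiset.card_add] at this
    rcases Multiset.card_pos.2 (by exact h1) with _
    have c1 : 0 < M₁.card := Multiset.card_pos.2 h1
    have c2 : 0 < M₂.card := Multiset.card_pos.2 h2
    omega
  | lam t ih =>
    intro M₁ M₂ h h1 h2
    exfalso
    have : ({Tm.lam t} : Multiset Tm).card = (M₁ + M₂).card := by rw [← h]; rfl
    simp only [Multiset.card_singleton, Multiset.card_add] at this
    have c1 : 0 < M₁.card := Multiset.card_pos.2 h1
    have c2 : 0 < M₂.card := Multiset.card_pos.2 h2
    omega
  | app t u iht ihu =>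
    intro M₁ M₂ h h1 h2
    exfalso
    have : ({Tm.app t u} : Multiset Tm).card = (M₁ + M₂).card := by rw [← h]; rfl
    simp only [Multiset.card_singleton, Multiset.card_add] at this
    have c1 : 0 < M₁.card := Multiset.card_pos.2 h1
    have c2 : 0 < M₂.card := Multiset.card_pos.2 h2
    omega
  | zero =>
    intro M₁ M₂ h h1 h2
    exfalso
    have : ({Tm.zero} : Multiset Tm).card = (M₁ + M₂).card := by rw [← h]; rfl
    simp only [Multiset.card_singleton, Multiset.card_add] at this
    have c1 : 0 < M₁.card := Multiset.card_pos.2 h1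
    have c2 : 0 < M₂.card := Multiset.card_pos.2 h2
    omega
  | add a b iha ihb =>
    intro M₁ M₂ h h1 h2
    obtain ⟨N₁₁, N₁₂, N₂₁, N₂₂, hA, hB, hM₁, hM₂⟩ := riesz (show ms a + ms b = M₁ + M₂ from h)
    by_cases e11 : N₁₁ = 0 <;> by_cases e12 : N₁₂ = 0 <;>
      by_cases e21 : N₂₁ = 0 <;> by_cases e22 : N₂₂ = 0
    all_goals (try (exact absurd (by rw [hA, e11, e12]; rfl) (ms_ne_zero a)))
    all_goals (try (exact absurd (by rw [hB, e21, e22]; rfl) (ms_ne_zero b)))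
    all_goals (try (exact absurd (by rw [hM₁, e11, e21]; rfl) h1))
    all_goals (try (exact absurd (by rw [hM₂, e12, e22]; rfl) h2))
    · -- (T,F,F,T) : swap
      refine ⟨b, a, Aeq.comm _ _, ?_, ?_⟩
      · rw [hM₁, e11, zero_add, hB, e22, add_zero]
      · rw [hM₂, e22, add_zero, hA, e11, zero_add]
    · -- (T,F,F,F) : split b; ⟨b₁, add a b₂⟩
      obtain ⟨b₁, b₂, hbe, hb1, hb2⟩ := ihb hB e21 e22
      refine ⟨b₁, .add a b₂, ?_, ?_, ?_⟩
      · have s1 : Aeq (Tm.add a b) (.add a (.add b₁ b₂)) := Aeq.addCongr (Aeq.refl a) hbe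
        have s2 : Aeq (Tm.add a (.add b₁ b₂)) (.add (.add a b₁) b₂) := Aeq.assoc _ _ _
        have s3 : Aeq (Tm.add (.add a b₁) b₂) (.add (.add b₁ a) b₂) :=
          Aeq.addCongr (Aeq.comm _ _) (Aeq.refl _)
        exact ((s1.trans s2).trans s3).trans (Aeq.assoc _ _ _).symm
      · rw [hb1, hM₁, e11, zero_add]
      · show ms a + ms b₂ = M₂
        rw [hb2, hM₂, hA, e11, zero_add]
    · -- (F,T,T,F) : identity
      refine ⟨a, b, Aeq.refl _, ?_, ?_⟩
      · rw [hM₁, e21, add_zero, hA, e12, add_zero]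
      · rw [hM₂, e12, zero_add, hB, e21, zero_add]
    · -- (F,T,F,F) : split b; ⟨add a b₁, b₂⟩
      obtain ⟨b₁, b₂, hbe, hb1, hb2⟩ := ihb hB e21 e22
      refine ⟨.add a b₁, b₂, ?_, ?_, ?_⟩
      · exact (Aeq.addCongr (Aeq.refl a) hbe).trans (Aeq.assoc _ _ _)
      · show ms a + ms b₁ = M₁
        rw [hb1, hM₁, hA, e12, add_zero]
      · rw [hb2, hM₂, e12, zero_add]
    · -- (F,F,T,F) : split a; ⟨a₁, add a₂ b⟩
      obtain ⟨a₁, a₂, hae, ha1, ha2⟩ := iha hA e11 e12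
      refine ⟨a₁, .add a₂ b, ?_, ?_, ?_⟩
      · exact (Aeq.addCongr hae (Aeq.refl b)).trans (Aeq.assoc _ _ _).symm
      · rw [ha1, hM₁, e21, add_zero]
      · show ms a₂ + ms b = M₂
        rw [ha2, hM₂, hB, e21, zero_add]
    · -- (F,F,F,T) : split a; ⟨add a₁ b, a₂⟩
      obtain ⟨a₁, a₂, hae, ha1, ha2⟩ := iha hA e11 e12
      refine ⟨.add a₁ b, a₂, ?_, ?_, ?_⟩
      · have s1 : Aeq (Tm.add a b) (.add (.add a₁ a₂) b) := Aeq.addCongr hae (Aeq.refl b)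
        have s2 : Aeq (Tm.add (.add a₁ a₂) b) (.add a₁ (.add a₂ b)) := (Aeq.assoc _ _ _).symm
        have s3 : Aeq (Tm.add a₁ (.add a₂ b)) (.add a₁ (.add b a₂)) :=
          Aeq.addCongr (Aeq.refl _) (Aeq.comm _ _)
        exact ((s1.trans s2).trans s3).trans (Aeq.assoc _ _ _)
      · show ms a₁ + ms b = M₁
        rw [ha1, hM₁, hB, e22, add_zero]
      · rw [ha2, hM₂, e22, add_zero]
    · -- (F,F,F,F) : medial
      obtain ⟨a₁, a₂, hae, ha1, ha2⟩ := iha hA e11 e12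
      obtain ⟨b₁, b₂, hbe, hb1, hb2⟩ := ihb hB e21 e22
      refine ⟨.add a₁ b₁, .add a₂ b₂, ?_, ?_, ?_⟩
      · exact (Aeq.addCongr hae hbe).trans (aeq_medial _ _ _ _)
      · show ms a₁ + ms b₁ = M₁
        rw [ha1, hb1, hM₁]
      · show ms a₂ + ms b₂ = M₂
        rw [ha2, hb2, hM₂]

lemma ms_rel_aeq : ∀ (x : Tm) {y : Tm}, Multiset.Rel Aeq (ms x) (ms y) → Aeq x y := by
  intro x
  induction x with
  | add l r ihl ihr =>
    intro y h
    simp only [ms] at h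
    rw [Multiset.rel_add_left] at h
    obtain ⟨M₁, M₂, h1, h2, hy⟩ := h
    have hM₁ : M₁ ≠ 0 := by
      intro e; subst e
      have := Multiset.card_eq_card_of_rel h1
      have := ms_card_pos l
      simp only [Multiset.card_zero] at *
      omega
    have hM₂ : M₂ ≠ 0 := by
      intro e; subst e
      have := Multiset.card_eq_card_of_rel h2
      have := ms_card_pos r
      simp only [Multiset.card_zero] at *
      omega
    obtain ⟨y₁, y₂, hy', e1, e2⟩ := exists_split y hy hM₁ hM₂
    have a1 := ihl (y := y₁) (by rwa [e1])
    have a2 := ihr (y := y₂) (by rwa [e2])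
    exact (Aeq.addCongr a1 a2).trans hy'.symm
  | var n =>
    intro y h
    obtain ⟨b, hb, hab⟩ := rel_singleton_left h
    rw [ms_singleton hb]; exact hab
  | lam t ih =>
    intro y h
    obtain ⟨b, hb, hab⟩ := rel_singleton_left h
    rw [ms_singleton hb]; exact hab
  | app t u iht ihu =>
    intro y h
    obtain ⟨b, hb, hab⟩ := rel_singleton_left h
    rw [ms_singleton hb]; exact hab
  | zero =>
    intro y h
    obtain ⟨b, hb, hab⟩ := rel_singleton_left h
    rw [ms_singleton hb]; exact hab

end SNProof
namespace SNProof

/-! #### Classification of one-step reductions -/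

lemma step_aeq {t t' w : Tm} (h : Aeq t t') (hs : Step t' w) : Step t w :=
  Step.ac h hs (Aeq.refl _)

lemma step_aeq' {t w w' : Tm} (hs : Step t w) (h : Aeq w w') : Step t w' :=
  Step.ac (Aeq.refl _) hs h

/-- Lift a step of an atomic summand to a step of the whole sum. -/
lemma step_atom_lift : ∀ (t : Tm) {a a' : Tm}, a ∈ ms t → Step a a' →
    ∃ t', Step t t' ∧ Multiset.Rel Aeq (ms t') ((ms t).erase a + ms a') := by
  intro t
  induction t with
  | add l r ihl ihr =>
    intro a a' ha hs
    rcases Multiset.mem_add.1 ha with h | h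
    · obtain ⟨l', hstep, hrel⟩ := ihl h hs
      refine ⟨.add l' r, Step.addLeft hstep, ?_⟩
      show Multiset.Rel Aeq (ms l' + ms r) _
      rw [show (ms (Tm.add l r)).erase a + ms a'
            = ((ms l).erase a + ms a') + ms r by
          show (ms l + ms r).erase a + ms a' = _
          rw [Multiset.erase_add_left_pos _ h, add_right_comm]]
      exact Multiset.Rel.add hrel (rel_refl _)
    · obtain ⟨r', hstep, hrel⟩ := ihr h hs
      refine ⟨.add l r', Step.addRight hstep, ?_⟩
      show Multiset.Rel Aeq (ms l + ms r') _
      rw [show (ms (Tm.add l r)).erase a + ms a'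
            = ms l + ((ms r).erase a + ms a') by
          show (ms l + ms r).erase a + ms a' = _
          rw [Multiset.erase_add_right_pos _ h, add_assoc]]
      exact Multiset.Rel.add (rel_refl _) hrel
  | var n =>
    intro a a' ha hs
    simp only [ms, Multiset.mem_singleton] at ha
    subst ha
    exact ⟨a', hs, by simp only [ms, Multiset.erase_singleton, zero_add]; exact rel_refl _⟩
  | lam t ih =>
    intro a a' ha hs
    simp only [ms, Multiset.mem_singleton] at ha
    subst ha
    exact ⟨a', hs, by simp only [ms, Multiset.erase_singleton, zero_add]; exact rel_refl _⟩
  | app t u iht ihu =>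
    intro a a' ha hs
    simp only [ms, Multiset.mem_singleton] at ha
    subst ha
    exact ⟨a', hs, by simp only [ms, Multiset.erase_singleton, zero_add]; exact rel_refl _⟩
  | zero =>
    intro a a' ha hs
    simp only [ms, Multiset.mem_singleton] at ha
    subst ha
    exact ⟨a', hs, by simp only [ms, Multiset.erase_singleton, zero_add]; exact rel_refl _⟩

/-- Remove a `𝟎` summand by a step. -/
lemma step_remove_zero : ∀ (t : Tm), Tm.zero ∈ ms t → 2 ≤ (ms t).card →
    ∃ t', Step t t' ∧ Multiset.Rel Aeq (ms t') ((ms t).erase .zero) := by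
  intro t
  induction t with
  | add l r ihl ihr =>
    intro hz hc
    rcases Multiset.mem_add.1 hz with h | h
    · by_cases hone : (ms l).card = 1
      · obtain ⟨x, hx⟩ := Multiset.card_eq_one.1 hone
        have hx0 : x = Tm.zero := by
          rw [hx] at h; exact (Multiset.mem_singleton.1 h).symm
        have hl : l = Tm.zero := ms_singleton (by rw [hx, hx0])
        subst hl
        refine ⟨r, ?_, ?_⟩
        · exact step_aeq (Aeq.comm _ _) (Step.addZero r)
        · show Multiset.Rel Aeq (ms r) ((ms Tm.zero + ms r).erase Tm.zero)
          rw [Multiset.erase_add_left_pos _ (by simp [ms])]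
          simp only [ms, Multiset.erase_singleton, zero_add]
          exact rel_refl _
      · have : 2 ≤ (ms l).card := by
          have := ms_card_pos l; omega
        obtain ⟨l', hstep, hrel⟩ := ihl h this
        refine ⟨.add l' r, Step.addLeft hstep, ?_⟩
        show Multiset.Rel Aeq (ms l' + ms r) ((ms l + ms r).erase Tm.zero)
        rw [Multiset.erase_add_left_pos _ h]
        exact Multiset.Rel.add hrel (rel_refl _)
    · by_cases hone : (ms r).card = 1
      · obtain ⟨x, hx⟩ := Multiset.card_eq_one.1 hone
        have hx0 : x = Tm.zero := by
          rw [hx] at h; exact (Multiset.mem_singleton.1 h).symm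
        have hr : r = Tm.zero := ms_singleton (by rw [hx, hx0])
        subst hr
        refine ⟨l, Step.addZero l, ?_⟩
        show Multiset.Rel Aeq (ms l) ((ms l + ms Tm.zero).erase Tm.zero)
        rw [Multiset.erase_add_right_pos _ (by simp [ms])]
        simp only [ms, Multiset.erase_singleton, add_zero]
        exact rel_refl _
      · have : 2 ≤ (ms r).card := by
          have := ms_card_pos r; omega
        obtain ⟨r', hstep, hrel⟩ := ihr h this
        refine ⟨.add l r', Step.addRight hstep, ?_⟩
        show Multiset.Rel Aeq (ms l + ms r') ((ms l + ms r).erase Tm.zero)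
        rw [Multiset.erase_add_right_pos _ h]
        exact Multiset.Rel.add (rel_refl _) hrel
  | var n => intro hz _; exact absurd (Multiset.mem_singleton.1 hz) (by simp)
  | lam t ih => intro hz _; exact absurd (Multiset.mem_singleton.1 hz) (by simp)
  | app t u iht ihu => intro hz _; exact absurd (Multiset.mem_singleton.1 hz) (by simp)
  | zero => intro _ hc; simp only [ms, Multiset.card_singleton] at hc; omega

/-- Helper: a step of an atomic term, seen at the multiset level. -/
lemma step_ms_atom {s w : Tm} (hs : Step s w) (hatom : ms s = {s}) :
    ∃ a a', a ∈ ms s ∧ Step a a' ∧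
      Multiset.Rel Aeq (ms w) ((ms s).erase a + ms a') :=
  ⟨s, w, by rw [hatom]; exact Multiset.mem_singleton_self _, hs,
    by rw [hatom, Multiset.erase_singleton, zero_add]; exact rel_refl _⟩

/-- Any step is either a step of one atomic summand, or the removal of a `𝟎` summand. -/
lemma step_ms : ∀ {s w : Tm}, Step s w →
    (∃ a a', a ∈ ms s ∧ Step a a' ∧
      Multiset.Rel Aeq (ms w) ((ms s).erase a + ms a')) ∨
    (Tm.zero ∈ ms s ∧ Multiset.Rel Aeq (ms w) ((ms s).erase .zero)) := by
  intro s w h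
  induction h with
  | distrRight t u s => exact Or.inl (step_ms_atom (Step.distrRight t u s) rfl)
  | distrLeft t u s => exact Or.inl (step_ms_atom (Step.distrLeft t u s) rfl)
  | zeroApp t => exact Or.inl (step_ms_atom (Step.zeroApp t) rfl)
  | appZero t => exact Or.inl (step_ms_atom (Step.appZero t) rfl)
  | beta t v hv => exact Or.inl (step_ms_atom (Step.beta t v hv) rfl)
  | appLeft h => exact Or.inl (step_ms_atom (Step.appLeft h) rfl)
  | appRight h => exact Or.inl (step_ms_atom (Step.appRight h) rfl)
  | lamCongr h => exact Or.inl (step_ms_atom (Step.lamCongr h) rfl)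
  | addZero t =>
    refine Or.inr ⟨by simp [ms], ?_⟩
    show Multiset.Rel Aeq (ms t) ((ms t + ms Tm.zero).erase Tm.zero)
    rw [Multiset.erase_add_right_pos _ (by simp [ms])]
    simp only [ms, Multiset.erase_singleton, add_zero]
    exact rel_refl _
  | addLeft h ih =>
    rename_i t t' u
    rcases ih with ⟨a, a', ha, hs, hrel⟩ | ⟨hz, hrel⟩
    · refine Or.inl ⟨a, a', Multiset.mem_add.2 (Or.inl ha), hs, ?_⟩
      show Multiset.Rel Aeq (ms t' + ms u) ((ms t + ms u).erase a + ms a')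
      rw [Multiset.erase_add_left_pos _ ha, add_right_comm]
      exact Multiset.Rel.add hrel (rel_refl _)
    · refine Or.inr ⟨Multiset.mem_add.2 (Or.inl hz), ?_⟩
      show Multiset.Rel Aeq (ms t' + ms u) ((ms t + ms u).erase .zero)
      rw [Multiset.erase_add_left_pos _ hz]
      exact Multiset.Rel.add hrel (rel_refl _)
  | addRight h ih =>
    rename_i u u' t
    rcases ih with ⟨a, a', ha, hs, hrel⟩ | ⟨hz, hrel⟩
    · refine Or.inl ⟨a, a', Multiset.mem_add.2 (Or.inr ha), hs, ?_⟩
      show Multiset.Rel Aeq (ms t + ms u') ((ms t + ms u).erase a + ms a')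
      rw [Multiset.erase_add_right_pos _ ha, add_assoc]
      exact Multiset.Rel.add (rel_refl _) hrel
    · refine Or.inr ⟨Multiset.mem_add.2 (Or.inr hz), ?_⟩
      show Multiset.Rel Aeq (ms t + ms u') ((ms t + ms u).erase .zero)
      rw [Multiset.erase_add_right_pos _ hz]
      exact Multiset.Rel.add (rel_refl _) hrel
  | ac ha hs hb ih =>
    rename_i t t' u' u
    have hms : Multiset.Rel Aeq (ms t) (ms t') := aeq_ms ha
    have hw : Multiset.Rel Aeq (ms u) (ms u') := aeq_ms hb.symm
    rcases ih with ⟨a₁, a', ha₁, hstep, hrel⟩ | ⟨hz, hrel⟩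
    · obtain ⟨a, haM, haeq, herase⟩ := rel_partner hms ha₁
      refine Or.inl ⟨a, a', haM, step_aeq haeq hstep, ?_⟩
      refine rel_trans (rel_trans hw hrel) ?_
      exact Multiset.Rel.add (rel_symm herase) (rel_refl _)
    · obtain ⟨a, haM, haeq, herase⟩ := rel_partner hms hz
      have : a = Tm.zero := aeq_zero haeq.symm
      subst this
      exact Or.inr ⟨haM, rel_trans (rel_trans hw hrel) (rel_symm herase)⟩

end SNProof
namespace SNProof

/-! #### `Aeq` congruences for shift and subst -/

lemma aeq_shift : ∀ {t t' : Tm}, Aeq t t' → ∀ d c, Aeq (Tm.shift d c t) (Tm.shift d c t') := by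
  intro t t' h
  induction h with
  | refl t => exact fun d c => Aeq.refl _
  | symm _ ih => exact fun d c => (ih d c).symm
  | trans _ _ ih1 ih2 => exact fun d c => (ih1 d c).trans (ih2 d c)
  | comm t u => intro d c; simp only [Tm.shift]; exact Aeq.comm _ _
  | assoc t u s => intro d c; simp only [Tm.shift]; exact Aeq.assoc _ _ _
  | lamCongr _ ih => intro d c; simp only [Tm.shift]; exact Aeq.lamCongr (ih d (c + 1))
  | appCongr _ _ ih1 ih2 =>
    intro d c; simp only [Tm.shift]; exact Aeq.appCongr (ih1 d c) (ih2 d c)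
  | addCongr _ _ ih1 ih2 =>
    intro d c; simp only [Tm.shift]; exact Aeq.addCongr (ih1 d c) (ih2 d c)

lemma aeq_subst_left : ∀ {b b' : Tm}, Aeq b b' → ∀ k v, Aeq (Tm.subst k v b) (Tm.subst k v b') := by
  intro b b' h
  induction h with
  | refl t => exact fun k v => Aeq.refl _
  | symm _ ih => exact fun k v => (ih k v).symm
  | trans _ _ ih1 ih2 => exact fun k v => (ih1 k v).trans (ih2 k v)
  | comm t u => intro k v; simp only [Tm.subst]; exact Aeq.comm _ _
  | assoc t u s => intro k v; simp only [Tm.subst]; exact Aeq.assoc _ _ _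
  | lamCongr _ ih => intro k v; simp only [Tm.subst]; exact Aeq.lamCongr (ih (k + 1) v)
  | appCongr _ _ ih1 ih2 =>
    intro k v; simp only [Tm.subst]; exact Aeq.appCongr (ih1 k v) (ih2 k v)
  | addCongr _ _ ih1 ih2 =>
    intro k v; simp only [Tm.subst]; exact Aeq.addCongr (ih1 k v) (ih2 k v)

lemma aeq_subst_right : ∀ (b : Tm) {v v' : Tm}, Aeq v v' → ∀ k,
    Aeq (Tm.subst k v b) (Tm.subst k v' b) := by
  intro b
  induction b with
  | var n =>
    intro v v' h k
    simp only [Tm.subst]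
    by_cases h1 : n = k
    · simp only [h1, if_pos rfl]; exact aeq_shift h k 0
    · simp only [if_neg h1]; exact Aeq.refl _
  | lam t ih => intro v v' h k; simp only [Tm.subst]; exact Aeq.lamCongr (ih h (k + 1))
  | app t u iht ihu =>
    intro v v' h k; simp only [Tm.subst]; exact Aeq.appCongr (iht h k) (ihu h k)
  | add t u iht ihu =>
    intro v v' h k; simp only [Tm.subst]; exact Aeq.addCongr (iht h k) (ihu h k)
  | zero => intro v v' h k; exact Aeq.refl _

lemma aeq_subst {b b' v v' : Tm} (hb : Aeq b b') (hv : Aeq v v') (k : ℕ) :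
    Aeq (Tm.subst k v b) (Tm.subst k v' b') :=
  (aeq_subst_left hb k v).trans (aeq_subst_right b' hv k)

/-! #### Classification of steps from sums, applications and abstractions -/

lemma step_add_cases {t u w : Tm} (h : Step (.add t u) w) :
    (∃ t', Step t t' ∧ Aeq w (.add t' u)) ∨ (∃ u', Step u u' ∧ Aeq w (.add t u')) ∨
    (u = .zero ∧ Aeq w t) ∨ (t = .zero ∧ Aeq w u) := by
  rcases step_ms h with ⟨a, a', ha, hs, hrel⟩ | ⟨hz, hrel⟩
  · rcases Multiset.mem_add.1 ha with hm | hm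
    · obtain ⟨t', hstep, hrel'⟩ := step_atom_lift t hm hs
      refine Or.inl ⟨t', hstep, ?_⟩
      apply ms_rel_aeq
      refine rel_trans hrel ?_
      rw [show (ms (Tm.add t u)).erase a + ms a' = ((ms t).erase a + ms a') + ms u by
        show (ms t + ms u).erase a + ms a' = _
        rw [Multiset.erase_add_left_pos _ hm, add_right_comm]]
      exact Multiset.Rel.add (rel_symm hrel') (rel_refl _)
    · obtain ⟨u', hstep, hrel'⟩ := step_atom_lift u hm hs
      refine Or.inr (Or.inl ⟨u', hstep, ?_⟩)
      apply ms_rel_aeq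
      refine rel_trans hrel ?_
      rw [show (ms (Tm.add t u)).erase a + ms a' = ms t + ((ms u).erase a + ms a') by
        show (ms t + ms u).erase a + ms a' = _
        rw [Multiset.erase_add_right_pos _ hm, add_assoc]]
      exact Multiset.Rel.add (rel_refl _) (rel_symm hrel')
  · rcases Multiset.mem_add.1 hz with hm | hm
    · by_cases hone : (ms t).card = 1
      · obtain ⟨x, hx⟩ := Multiset.card_eq_one.1 hone
        have hx0 : x = Tm.zero := by
          rw [hx] at hm; exact (Multiset.mem_singleton.1 hm).symm
        have ht0 : t = Tm.zero := ms_singleton (by rw [hx, hx0])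
        refine Or.inr (Or.inr (Or.inr ⟨ht0, ?_⟩))
        apply ms_rel_aeq
        refine rel_trans hrel ?_
        rw [show (ms (Tm.add t u)).erase Tm.zero = ms u by
          show (ms t + ms u).erase Tm.zero = ms u
          rw [Multiset.erase_add_left_pos _ hm, ht0]
          simp [ms]]
        exact rel_refl _
      · have h2 : 2 ≤ (ms t).card := by have := ms_card_pos t; omega
        obtain ⟨t', hstep, hrel'⟩ := step_remove_zero t hm h2
        refine Or.inl ⟨t', hstep, ?_⟩
        apply ms_rel_aeq
        refine rel_trans hrel ?_
        rw [show (ms (Tm.add t u)).erase Tm.zero = (ms t).erase Tm.zero + ms u by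
          show (ms t + ms u).erase Tm.zero = _
          rw [Multiset.erase_add_left_pos _ hm]]
        exact Multiset.Rel.add (rel_symm hrel') (rel_refl _)
    · by_cases hone : (ms u).card = 1
      · obtain ⟨x, hx⟩ := Multiset.card_eq_one.1 hone
        have hx0 : x = Tm.zero := by
          rw [hx] at hm; exact (Multiset.mem_singleton.1 hm).symm
        have hu0 : u = Tm.zero := ms_singleton (by rw [hx, hx0])
        refine Or.inr (Or.inr (Or.inl ⟨hu0, ?_⟩))
        apply ms_rel_aeq
        refine rel_trans hrel ?_
        rw [show (ms (Tm.add t u)).erase Tm.zero = ms t by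
          show (ms t + ms u).erase Tm.zero = ms t
          rw [Multiset.erase_add_right_pos _ hm, hu0]
          simp [ms]]
        exact rel_refl _
      · have h2 : 2 ≤ (ms u).card := by have := ms_card_pos u; omega
        obtain ⟨u', hstep, hrel'⟩ := step_remove_zero u hm h2
        refine Or.inr (Or.inl ⟨u', hstep, ?_⟩)
        apply ms_rel_aeq
        refine rel_trans hrel ?_
        rw [show (ms (Tm.add t u)).erase Tm.zero = ms t + (ms u).erase Tm.zero by
          show (ms t + ms u).erase Tm.zero = _
          rw [Multiset.erase_add_right_pos _ hm]]
        exact Multiset.Rel.add (rel_refl _) (rel_symm hrel')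

lemma step_app_aux : ∀ {s w : Tm}, Step s w → ∀ {p q : Tm}, Aeq s (.app p q) →
    (∃ p', Step p p' ∧ Aeq w (.app p' q)) ∨
    (∃ q', Step q q' ∧ Aeq w (.app p q')) ∨
    (∃ x₁ x₂, Aeq p (.add x₁ x₂) ∧ Aeq w (.add (.app x₁ q) (.app x₂ q))) ∨
    (∃ y₁ y₂, Aeq q (.add y₁ y₂) ∧ Aeq w (.add (.app p y₁) (.app p y₂))) ∨
    (p = .zero ∧ Aeq w .zero) ∨ (q = .zero ∧ Aeq w .zero) ∨
    (∃ b, p = .lam b ∧ IsValue q ∧ Aeq w (Tm.subst 0 q b)) := by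
  intro s w h
  induction h with
  | distrRight t u s =>
    intro p q hpq
    obtain ⟨p', q', heq, h1, h2⟩ := aeq_app hpq
    cases heq
    refine Or.inr (Or.inr (Or.inl ⟨t, u, h1.symm, ?_⟩))
    exact Aeq.addCongr (Aeq.appCongr (Aeq.refl t) h2) (Aeq.appCongr (Aeq.refl u) h2)
  | distrLeft t u s =>
    intro p q hpq
    obtain ⟨p', q', heq, h1, h2⟩ := aeq_app hpq
    cases heq
    refine Or.inr (Or.inr (Or.inr (Or.inl ⟨u, s, h2.symm, ?_⟩)))
    exact Aeq.addCongr (Aeq.appCongr h1 (Aeq.refl u)) (Aeq.appCongr h1 (Aeq.refl s))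
  | zeroApp t =>
    intro p q hpq
    obtain ⟨p', q', heq, h1, h2⟩ := aeq_app hpq
    cases heq
    exact Or.inr (Or.inr (Or.inr (Or.inr (Or.inl ⟨aeq_zero h1, Aeq.refl _⟩))))
  | appZero t =>
    intro p q hpq
    obtain ⟨p', q', heq, h1, h2⟩ := aeq_app hpq
    cases heq
    exact Or.inr (Or.inr (Or.inr (Or.inr (Or.inr (Or.inl ⟨aeq_zero h2, Aeq.refl _⟩)))))
  | addZero t =>
    intro p q hpq
    obtain ⟨c, d, hcd⟩ := aeq_add hpq
    exact absurd hcd (by simp)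
  | beta t v hv =>
    intro p q hpq
    obtain ⟨p', q', heq, h1, h2⟩ := aeq_app hpq
    cases heq
    obtain ⟨b, hb, hbe⟩ := aeq_lam h1
    refine Or.inr (Or.inr (Or.inr (Or.inr (Or.inr (Or.inr ⟨b, hb, ?_, ?_⟩)))))
    · exact isValue_aeq hv h2
    · exact aeq_subst hbe h2 0
  | appLeft h ih =>
    rename_i t t' u
    intro p q hpq
    obtain ⟨p', q', heq, h1, h2⟩ := aeq_app hpq
    cases heq
    exact Or.inl ⟨t', step_aeq h1.symm h, Aeq.appCongr (Aeq.refl t') h2⟩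
  | appRight h ih =>
    rename_i u u' t
    intro p q hpq
    obtain ⟨p', q', heq, h1, h2⟩ := aeq_app hpq
    cases heq
    exact Or.inr (Or.inl ⟨u', step_aeq h2.symm h, Aeq.appCongr h1 (Aeq.refl u')⟩)
  | addLeft h =>
    intro p q hpq
    obtain ⟨c, d, hcd⟩ := aeq_add hpq
    exact absurd hcd (by simp)
  | addRight h =>
    intro p q hpq
    obtain ⟨c, d, hcd⟩ := aeq_add hpq
    exact absurd hcd (by simp)
  | lamCongr h =>
    intro p q hpq
    obtain ⟨t'', heq, _⟩ := aeq_lam hpq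
    exact absurd heq (by simp)
  | ac ha hs hb ih =>
    intro p q hpq
    rcases ih (ha.symm.trans hpq) with
      ⟨p', h1, h2⟩ | ⟨q', h1, h2⟩ | ⟨x₁, x₂, h1, h2⟩ | ⟨y₁, y₂, h1, h2⟩ |
      ⟨h1, h2⟩ | ⟨h1, h2⟩ | ⟨b, h1, h2, h3⟩
    · exact Or.inl ⟨p', h1, hb.symm.trans h2⟩
    · exact Or.inr (Or.inl ⟨q', h1, hb.symm.trans h2⟩)
    · exact Or.inr (Or.inr (Or.inl ⟨x₁, x₂, h1, hb.symm.trans h2⟩))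
    · exact Or.inr (Or.inr (Or.inr (Or.inl ⟨y₁, y₂, h1, hb.symm.trans h2⟩)))
    · exact Or.inr (Or.inr (Or.inr (Or.inr (Or.inl ⟨h1, hb.symm.trans h2⟩))))
    · exact Or.inr (Or.inr (Or.inr (Or.inr (Or.inr (Or.inl ⟨h1, hb.symm.trans h2⟩)))))
    · exact Or.inr (Or.inr (Or.inr (Or.inr (Or.inr (Or.inr ⟨b, h1, h2, hb.symm.trans h3⟩)))))

lemma step_app_cases {p q w : Tm} (h : Step (.app p q) w) :
    (∃ p', Step p p' ∧ Aeq w (.app p' q)) ∨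
    (∃ q', Step q q' ∧ Aeq w (.app p q')) ∨
    (∃ x₁ x₂, Aeq p (.add x₁ x₂) ∧ Aeq w (.add (.app x₁ q) (.app x₂ q))) ∨
    (∃ y₁ y₂, Aeq q (.add y₁ y₂) ∧ Aeq w (.add (.app p y₁) (.app p y₂))) ∨
    (p = .zero ∧ Aeq w .zero) ∨ (q = .zero ∧ Aeq w .zero) ∨
    (∃ b, p = .lam b ∧ IsValue q ∧ Aeq w (Tm.subst 0 q b)) :=
  step_app_aux h (Aeq.refl _)

lemma step_lam_aux : ∀ {s w : Tm}, Step s w → ∀ {b : Tm}, Aeq s (.lam b) →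
    ∃ b', Step b b' ∧ Aeq w (.lam b') := by
  intro s w h
  induction h with
  | lamCongr h ih =>
    rename_i t t'
    intro b hb
    obtain ⟨b', heq, hbe⟩ := aeq_lam hb
    cases heq
    exact ⟨t', step_aeq hbe.symm h, Aeq.refl _⟩
  | ac ha hs hb ih =>
    intro b hbe
    obtain ⟨b', h1, h2⟩ := ih (ha.symm.trans hbe)
    exact ⟨b', h1, hb.symm.trans h2⟩
  | distrRight t u s => intro b hb; obtain ⟨c, d, heq, _, _⟩ := aeq_app hb; exact absurd heq (by simp)
  | distrLeft t u s => intro b hb; obtain ⟨c, d, heq, _, _⟩ := aeq_app hb; exact absurd heq (by simp)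
  | zeroApp t => intro b hb; obtain ⟨c, d, heq, _, _⟩ := aeq_app hb; exact absurd heq (by simp)
  | appZero t => intro b hb; obtain ⟨c, d, heq, _, _⟩ := aeq_app hb; exact absurd heq (by simp)
  | addZero t => intro b hb; obtain ⟨c, d, heq⟩ := aeq_add hb; exact absurd heq (by simp)
  | beta t v hv => intro b hb; obtain ⟨c, d, heq, _, _⟩ := aeq_app hb; exact absurd heq (by simp)
  | appLeft h ih => intro b hb; obtain ⟨c, d, heq, _, _⟩ := aeq_app hb; exact absurd heq (by simp)
  | appRight h ih => intro b hb; obtain ⟨c, d, heq, _, _⟩ := aeq_app hb; exact absurd heq (by simp)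
  | addLeft h ih => intro b hb; obtain ⟨c, d, heq⟩ := aeq_add hb; exact absurd heq (by simp)
  | addRight h ih => intro b hb; obtain ⟨c, d, heq⟩ := aeq_add hb; exact absurd heq (by simp)

lemma step_lam_cases {b w : Tm} (h : Step (.lam b) w) :
    ∃ b', Step b b' ∧ Aeq w (.lam b') := step_lam_aux h (Aeq.refl _)

lemma not_step_var : ∀ {s w : Tm}, Step s w → ∀ {n : ℕ}, s ≠ .var n := by
  intro s w h
  induction h with
  | ac ha hs hb ih =>
    intro n he
    subst he
    have := aeq_var ha
    exact ih this
  | distrRight t u s => simp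
  | distrLeft t u s => simp
  | zeroApp t => simp
  | appZero t => simp
  | addZero t => simp
  | beta t v hv => simp
  | appLeft h => simp
  | appRight h => simp
  | addLeft h => simp
  | addRight h => simp
  | lamCongr h => simp

lemma not_step_zero : ∀ {s w : Tm}, Step s w → s ≠ .zero := by
  intro s w h
  induction h with
  | ac ha hs hb ih =>
    intro he
    subst he
    exact ih (aeq_zero ha)
  | distrRight t u s => simp
  | distrLeft t u s => simp
  | zeroApp t => simp
  | appZero t => simp
  | addZero t => simp
  | beta t v hv => simp
  | appLeft h => simp
  | appRight h => simp
  | addLeft h => simp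
  | addRight h => simp
  | lamCongr h => simp

/-! #### Basic SN lemmas -/

lemma sn_aeq {t t' : Tm} (h : Aeq t t') (hsn : SN t) : SN t' :=
  Acc.intro t' fun y hy => hsn.inv (step_aeq h hy)

lemma sn_step {t w : Tm} (hsn : SN t) (h : Step t w) : SN w := hsn.inv h

lemma sn_add : ∀ (t : Tm), SN t → ∀ (u : Tm), SN u → SN (.add t u) := by
  intro t ht
  induction ht with
  | intro t hred iht =>
    intro u hu
    induction hu with
    | intro u hred' ihu =>
      have snt : SN t := Acc.intro t hred
      have snu : SN u := Acc.intro u hred'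
      constructor
      intro w hw
      rcases step_add_cases hw with ⟨t', hstep, haw⟩ | ⟨u', hstep, haw⟩ |
        ⟨_, haw⟩ | ⟨_, haw⟩
      · exact sn_aeq haw.symm (iht t' hstep u snu)
      · exact sn_aeq haw.symm (ihu u' hstep)
      · exact sn_aeq haw.symm snt
      · exact sn_aeq haw.symm snu

/-! #### Sub-sums -/

/-- `x` is (up to `Aeq`) a sub-sum of `t`. -/
def SubSum (x t : Tm) : Prop := ∃ M, M ≤ ms t ∧ Multiset.Rel Aeq (ms x) M

lemma subsum_refl (t : Tm) : SubSum t t := ⟨ms t, le_refl _, rel_refl _⟩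

lemma subsum_of_le_rel {x t' : Tm} {M N : Multiset Tm} (h1 : Multiset.Rel Aeq (ms x) M)
    (h2 : M ≤ N) (h3 : Multiset.Rel Aeq N (ms t')) : SubSum x t' := by
  obtain ⟨R, hR⟩ := Multiset.le_iff_exists_add.1 h2
  rw [hR, Multiset.rel_add_left] at h3
  obtain ⟨N₁, N₂, hM, hRR, hms⟩ := h3
  exact ⟨N₁, hms ▸ Multiset.le_add_right _ _, rel_trans h1 hM⟩

lemma subsum_trans {x y t : Tm} (h1 : SubSum x y) (h2 : SubSum y t) : SubSum x t := by
  obtain ⟨M₁, hle₁, hrel₁⟩ := h1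
  obtain ⟨M₂, hle₂, hrel₂⟩ := h2
  obtain ⟨R, hR⟩ := Multiset.le_iff_exists_add.1 hle₁
  rw [hR, Multiset.rel_add_left] at hrel₂
  obtain ⟨N₁, N₂, hM, hRR, hms⟩ := hrel₂
  exact ⟨N₁, le_trans (hms ▸ Multiset.le_add_right _ _) hle₂, rel_trans hrel₁ hM⟩

lemma subsum_of_aeq_add {t x y : Tm} (h : Aeq t (.add x y)) : SubSum x t ∧ SubSum y t := by
  have hrel : Multiset.Rel Aeq (ms x + ms y) (ms t) := rel_symm (aeq_ms h)
  rw [Multiset.rel_add_left] at hrel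
  obtain ⟨N₁, N₂, h1, h2, hms⟩ := hrel
  exact ⟨⟨N₁, hms ▸ Multiset.le_add_right _ _, h1⟩, ⟨N₂, hms ▸ Multiset.le_add_left _ _, h2⟩⟩

lemma subsum_step_lift {x t x' : Tm} (h : SubSum x t) (hs : Step x x') :
    ∃ t', Step t t' ∧ SubSum x' t' := by
  obtain ⟨M, hle, hrel⟩ := h
  rcases step_ms hs with ⟨a, a', ha, hstep, hrel'⟩ | ⟨hz, hrel'⟩
  · obtain ⟨a0, ha0M, ha0eq, herase⟩ := rel_partner (rel_symm hrel) ha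
    have ha0t : a0 ∈ ms t := Multiset.mem_of_le hle ha0M
    obtain ⟨t', hstept, hrelt⟩ := step_atom_lift t ha0t (step_aeq ha0eq hstep)
    refine ⟨t', hstept, ?_⟩
    refine subsum_of_le_rel (M := M.erase a0 + ms a')
      (rel_trans hrel' (Multiset.Rel.add (rel_symm herase) (rel_refl _))) ?_ (rel_symm hrelt)
    exact add_le_add_left (Multiset.erase_le_erase a0 hle) _
  · obtain ⟨a0, ha0M, ha0eq, herase⟩ := rel_partner (rel_symm hrel) hz
    have ha00 : a0 = Tm.zero := aeq_zero ha0eq.symm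
    subst ha00
    have ha0t : Tm.zero ∈ ms t := Multiset.mem_of_le hle ha0M
    have hcard : 2 ≤ (ms t).card := by
      by_contra hc
      have h1 : (ms t).card = 1 := by have := ms_card_pos t; omega
      obtain ⟨z, hzz⟩ := Multiset.card_eq_one.1 h1
      -- then M ≤ {z}, and card M = card (ms x) ≥ 2 since x steps by zero removal
      have hxcard : 2 ≤ (ms x).card := by
        by_contra hc2
        have h2 : (ms x).card = 1 := by have := ms_card_pos x; omega
        obtain ⟨z', hzz'⟩ := Multiset.card_eq_one.1 h2
        have : z' = Tm.zero := by rw [hzz'] at hz; exact (Multiset.mem_singleton.1 hz).symm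
        subst this
        exact not_step_zero hs (ms_singleton hzz')
      have hMcard : (ms x).card = M.card := Multiset.card_eq_card_of_rel hrel
      have : M.card ≤ (ms t).card := Multiset.card_le_card hle
      omega
    obtain ⟨t', hstept, hrelt⟩ := step_remove_zero t ha0t hcard
    refine ⟨t', hstept, ?_⟩
    refine subsum_of_le_rel (M := M.erase Tm.zero)
      (rel_trans hrel' (rel_symm herase)) ?_ (rel_symm hrelt)
    exact Multiset.erase_le_erase Tm.zero hle

lemma sn_subsum : ∀ (t : Tm), SN t → ∀ (x : Tm), SubSum x t → SN x := by
  intro t ht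
  induction ht with
  | intro t hred ih =>
    intro x hsub
    constructor
    intro x' hx'
    obtain ⟨t', hstept, hsub'⟩ := subsum_step_lift hsub hx'
    exact ih t' hstept x' hsub'

/-- The auxiliary order for the application lemma. -/
def Lt1 (x p : Tm) : Prop := Step p x ∨ (SubSum x p ∧ (ms x).card < (ms p).card)

lemma acc_lt1_aux : ∀ (p : Tm), SN p → ∀ (n : ℕ) (x : Tm), (ms x).card ≤ n → SubSum x p →
    Acc Lt1 x := by
  intro p hp
  induction hp with
  | intro p hred ih =>
    intro n
    induction n with
    | zero => intro x hc _; exact absurd hc (by have := ms_card_pos x; omega)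
    | succ n ihn =>
      intro x hc hsub
      constructor
      intro y hy
      rcases hy with hstep | ⟨hsub', hclt⟩
      · obtain ⟨p', hp', hsub''⟩ := subsum_step_lift hsub hstep
        exact ih p' hp' (ms y).card y le_rfl hsub''
      · exact ihn y (by omega) (subsum_trans hsub' hsub)

lemma acc_lt1 {p : Tm} (hp : SN p) : Acc Lt1 p :=
  acc_lt1_aux p hp (ms p).card p le_rfl (subsum_refl p)

end SNProof
namespace SNProof

/-! #### de Bruijn lemmas for terms -/

lemma shift_zero : ∀ (t : Tm) (c : ℕ), Tm.shift 0 c t = t := by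
  intro t
  induction t with
  | var n => intro c; simp only [Tm.shift]; split_ifs <;> simp
  | lam t ih => intro c; simp only [Tm.shift, ih]
  | app t u iht ihu => intro c; simp only [Tm.shift, iht, ihu]
  | add t u iht ihu => intro c; simp only [Tm.shift, iht, ihu]
  | zero => intro c; rfl

lemma shift_shift_disjoint : ∀ (t : Tm) (d c d' c' : ℕ), c' ≤ c →
    Tm.shift d' c' (Tm.shift d c t) = Tm.shift d (c + d') (Tm.shift d' c' t) := by
  intro t
  induction t with
  | var n =>
    intro d c d' c' h
    simp only [Tm.shift]
    split_ifs <;> simp only [Tm.shift] <;> split_ifs <;>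
      first
      | rfl
      | (simp only [Tm.var.injEq]; omega)
      | omega
  | lam t ih =>
    intro d c d' c' h
    simp only [Tm.shift]
    rw [ih d (c + 1) d' (c' + 1) (by omega), show c + 1 + d' = c + d' + 1 by omega]
  | app t u iht ihu =>
    intro d c d' c' h
    simp only [Tm.shift]
    rw [iht d c d' c' h, ihu d c d' c' h]
  | add t u iht ihu =>
    intro d c d' c' h
    simp only [Tm.shift]
    rw [iht d c d' c' h, ihu d c d' c' h]
  | zero => intro _ _ _ _ _; rfl

lemma shift_shift_merge : ∀ (t : Tm) (d c d' c' : ℕ), c ≤ c' → c' ≤ c + d →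
    Tm.shift d' c' (Tm.shift d c t) = Tm.shift (d + d') c t := by
  intro t
  induction t with
  | var n =>
    intro d c d' c' h1 h2
    simp only [Tm.shift]
    split_ifs <;> simp only [Tm.shift] <;> split_ifs <;>
      first
      | rfl
      | (simp only [Tm.var.injEq]; omega)
      | omega
  | lam t ih =>
    intro d c d' c' h1 h2
    simp only [Tm.shift]
    rw [ih d (c + 1) d' (c' + 1) (by omega) (by omega)]
  | app t u iht ihu =>
    intro d c d' c' h1 h2
    simp only [Tm.shift]
    rw [iht d c d' c' h1 h2, ihu d c d' c' h1 h2]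
  | add t u iht ihu =>
    intro d c d' c' h1 h2
    simp only [Tm.shift]
    rw [iht d c d' c' h1 h2, ihu d c d' c' h1 h2]
  | zero => intro _ _ _ _ _ _; rfl

lemma subst_shift_cancel : ∀ (t v : Tm) (k c d : ℕ), c ≤ k → k < c + d →
    Tm.subst k v (Tm.shift d c t) = Tm.shift (d - 1) c t := by
  intro t
  induction t with
  | var n =>
    intro v k c d h1 h2
    simp only [Tm.shift]
    split_ifs with h
    · simp only [Tm.subst]
      split_ifs <;> first | rfl | (simp only [Tm.var.injEq]; omega) | omega
    · simp only [Tm.subst]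
      split_ifs <;> first | rfl | (simp only [Tm.var.injEq]; omega) | omega
  | lam t ih =>
    intro v k c d h1 h2
    simp only [Tm.shift, Tm.subst]
    rw [ih v (k + 1) (c + 1) d (by omega) (by omega)]
  | app t u iht ihu =>
    intro v k c d h1 h2
    simp only [Tm.shift, Tm.subst]
    rw [iht v k c d h1 h2, ihu v k c d h1 h2]
  | add t u iht ihu =>
    intro v k c d h1 h2
    simp only [Tm.shift, Tm.subst]
    rw [iht v k c d h1 h2, ihu v k c d h1 h2]
  | zero => intro _ _ _ _ _ _; rfl

lemma shift_subst_low : ∀ (t v : Tm) (k d c : ℕ), c ≤ k →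
    Tm.shift d c (Tm.subst k v t) = Tm.subst (k + d) v (Tm.shift d c t) := by
  intro t
  induction t with
  | var n =>
    intro v k d c h
    by_cases hnk : n = k
    · rw [show Tm.subst k v (.var n) = Tm.shift k 0 v by
          simp only [Tm.subst]; rw [if_pos hnk],
        show Tm.shift d c (.var n) = .var (k + d) by
          simp only [Tm.shift]; rw [if_neg (by omega)]; rw [hnk],
        show Tm.subst (k + d) v (.var (k + d)) = Tm.shift (k + d) 0 v by simp [Tm.subst]]
      exact shift_shift_merge v k 0 d c (by omega) (by omega)
    · rcases Nat.lt_or_ge k n with hkn | hkn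
      · rw [show Tm.subst k v (.var n) = .var (n - 1) by
            simp only [Tm.subst]; rw [if_neg hnk, if_pos hkn],
          show Tm.shift d c (.var (n - 1)) = .var (n - 1 + d) by
            simp only [Tm.shift]; rw [if_neg (by omega)],
          show Tm.shift d c (.var n) = .var (n + d) by
            simp only [Tm.shift]; rw [if_neg (by omega)],
          show Tm.subst (k + d) v (.var (n + d)) = .var (n + d - 1) by
            simp only [Tm.subst]; rw [if_neg (by omega), if_pos (by omega)],
          show n - 1 + d = n + d - 1 by omega]
      · have hnk' : n < k := by omega
        by_cases hnc : n < c
        · rw [show Tm.subst k v (.var n) = .var n by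
              simp only [Tm.subst]; rw [if_neg hnk, if_neg (by omega)],
            show Tm.shift d c (.var n) = .var n by
              simp only [Tm.shift]; rw [if_pos hnc],
            show Tm.subst (k + d) v (.var n) = .var n by
              simp only [Tm.subst]; rw [if_neg (by omega), if_neg (by omega)]]
        · rw [show Tm.subst k v (.var n) = .var n by
              simp only [Tm.subst]; rw [if_neg hnk, if_neg (by omega)],
            show Tm.shift d c (.var n) = .var (n + d) by
              simp only [Tm.shift]; rw [if_neg hnc],
            show Tm.subst (k + d) v (.var (n + d)) = .var (n + d) by
              simp only [Tm.subst]; rw [if_neg (by omega), if_neg (by omega)]]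
  | lam t ih =>
    intro v k d c h
    simp only [Tm.subst, Tm.shift]
    rw [ih v (k + 1) d (c + 1) (by omega), show k + 1 + d = k + d + 1 by omega]
  | app t u iht ihu =>
    intro v k d c h
    simp only [Tm.subst, Tm.shift]
    rw [iht v k d c h, ihu v k d c h]
  | add t u iht ihu =>
    intro v k d c h
    simp only [Tm.subst, Tm.shift]
    rw [iht v k d c h, ihu v k d c h]
  | zero => intro _ _ _ _ _; rfl

lemma subst_subst : ∀ (b : Tm) (j k : ℕ) (v w : Tm), j ≤ k →
    Tm.subst k v (Tm.subst j w b) =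
      Tm.subst j (Tm.subst (k - j) v w) (Tm.subst (k + 1) v b) := by
  intro b
  induction b with
  | var n =>
    intro j k v w h
    by_cases hnj : n = j
    · rw [show Tm.subst j w (.var n) = Tm.shift j 0 w by
          simp only [Tm.subst]; rw [if_pos hnj],
        show Tm.subst (k + 1) v (.var n) = .var j by
          simp only [Tm.subst]; rw [if_neg (by omega), if_neg (by omega), hnj],
        show Tm.subst j (Tm.subst (k - j) v w) (.var j) = Tm.shift j 0 (Tm.subst (k - j) v w) by
          simp [Tm.subst],
        shift_subst_low w v (k - j) j 0 (by omega), show k - j + j = k by omega]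
    · rcases Nat.lt_or_ge j n with hjn | hjn
      · rcases Nat.lt_trichotomy n (k + 1) with hnk | hnk | hnk
        · rw [show Tm.subst j w (.var n) = .var (n - 1) by
              simp only [Tm.subst]; rw [if_neg hnj, if_pos hjn],
            show Tm.subst k v (.var (n - 1)) = .var (n - 1) by
              simp only [Tm.subst]; rw [if_neg (by omega), if_neg (by omega)],
            show Tm.subst (k + 1) v (.var n) = .var n by
              simp only [Tm.subst]; rw [if_neg (by omega), if_neg (by omega)],
            show Tm.subst j (Tm.subst (k - j) v w) (.var n) = .var (n - 1) by
              simp only [Tm.subst]; rw [if_neg hnj, if_pos hjn]]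
        · rw [show Tm.subst j w (.var n) = .var (n - 1) by
              simp only [Tm.subst]; rw [if_neg hnj, if_pos hjn],
            show Tm.subst k v (.var (n - 1)) = Tm.shift k 0 v by
              simp only [Tm.subst]; rw [if_pos (by omega)],
            show Tm.subst (k + 1) v (.var n) = Tm.shift (k + 1) 0 v by
              simp only [Tm.subst]; rw [if_pos (by omega)],
            subst_shift_cancel v (Tm.subst (k - j) v w) j 0 (k + 1) (by omega) (by omega),
            show k + 1 - 1 = k by omega]
        · rw [show Tm.subst j w (.var n) = .var (n - 1) by
              simp only [Tm.subst]; rw [if_neg hnj, if_pos hjn],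
            show Tm.subst k v (.var (n - 1)) = .var (n - 2) by
              simp only [Tm.subst]; rw [if_neg (by omega), if_pos (by omega)]
              simp only [Tm.var.injEq]; omega,
            show Tm.subst (k + 1) v (.var n) = .var (n - 1) by
              simp only [Tm.subst]; rw [if_neg (by omega), if_pos (by omega)],
            show Tm.subst j (Tm.subst (k - j) v w) (.var (n - 1)) = .var (n - 2) by
              simp only [Tm.subst]; rw [if_neg (by omega), if_pos (by omega)]
              simp only [Tm.var.injEq]; omega]
      · have hnj' : n < j := by omega
        rw [show Tm.subst j w (.var n) = .var n by
            simp only [Tm.subst]; rw [if_neg hnj, if_neg (by omega)],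
          show Tm.subst k v (.var n) = .var n by
            simp only [Tm.subst]; rw [if_neg (by omega), if_neg (by omega)],
          show Tm.subst (k + 1) v (.var n) = .var n by
            simp only [Tm.subst]; rw [if_neg (by omega), if_neg (by omega)],
          show Tm.subst j (Tm.subst (k - j) v w) (.var n) = .var n by
            simp only [Tm.subst]; rw [if_neg hnj, if_neg (by omega)]]
  | lam t ih =>
    intro j k v w h
    simp only [Tm.subst]
    rw [ih (j + 1) (k + 1) v w (by omega), show k + 1 - (j + 1) = k - j by omega]
  | app t u iht ihu =>
    intro j k v w h
    simp only [Tm.subst]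
    rw [iht j k v w h, ihu j k v w h]
  | add t u iht ihu =>
    intro j k v w h
    simp only [Tm.subst]
    rw [iht j k v w h, ihu j k v w h]
  | zero => intro _ _ _ _ _; rfl

lemma isValue_shift {v : Tm} (hv : IsValue v) (d c : ℕ) : IsValue (Tm.shift d c v) := by
  cases hv with
  | var n => simp only [Tm.shift]; split_ifs <;> exact IsValue.var _
  | lam t => exact IsValue.lam _

lemma isValue_subst {v v₀ : Tm} (hv : IsValue v) (hv₀ : IsValue v₀) (k : ℕ) :
    IsValue (Tm.subst k v v₀) := by
  cases hv₀ with
  | var n =>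
    simp only [Tm.subst]
    split_ifs
    · exact isValue_shift hv k 0
    · exact IsValue.var _
    · exact IsValue.var _
  | lam t => exact IsValue.lam _

/-- Forward substitutivity of one-step reduction (by a value). -/
lemma step_subst : ∀ {t u : Tm}, Step t u → ∀ {v : Tm}, IsValue v → ∀ (k : ℕ),
    Step (Tm.subst k v t) (Tm.subst k v u) := by
  intro t u h
  induction h with
  | distrRight t u s => intro v hv k; simp only [Tm.subst]; exact Step.distrRight _ _ _
  | distrLeft t u s => intro v hv k; simp only [Tm.subst]; exact Step.distrLeft _ _ _
  | zeroApp t => intro v hv k; simp only [Tm.subst]; exact Step.zeroApp _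
  | appZero t => intro v hv k; simp only [Tm.subst]; exact Step.appZero _
  | addZero t => intro v hv k; simp only [Tm.subst]; exact Step.addZero _
  | beta t v₀ hv₀ =>
    intro v hv k
    simp only [Tm.subst]
    rw [subst_subst t 0 k v v₀ (by omega)]
    simpa using Step.beta (Tm.subst (k + 1) v t) (Tm.subst k v v₀) (isValue_subst hv hv₀ k)
  | appLeft h ih => intro v hv k; simp only [Tm.subst]; exact Step.appLeft (ih hv k)
  | appRight h ih => intro v hv k; simp only [Tm.subst]; exact Step.appRight (ih hv k)
  | addLeft h ih => intro v hv k; simp only [Tm.subst]; exact Step.addLeft (ih hv k)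
  | addRight h ih => intro v hv k; simp only [Tm.subst]; exact Step.addRight (ih hv k)
  | lamCongr h ih => intro v hv k; simp only [Tm.subst]; exact Step.lamCongr (ih hv (k + 1))
  | ac ha hs hb ih =>
    intro v hv k
    exact Step.ac (aeq_subst_left ha k v) (ih hv k) (aeq_subst_left hb k v)

/-! #### Simultaneous substitutions -/

/-- Extend a simultaneous substitution by one term. -/
def consSub (v : Tm) (σ : ℕ → Tm) : ℕ → Tm
  | 0 => v
  | n + 1 => σ n

lemma msubst_congr : ∀ (t : Tm) {σ σ' : ℕ → Tm}, (∀ n, σ n = σ' n) →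
    Tm.msubst σ t = Tm.msubst σ' t := by
  intro t
  induction t with
  | var n => intro σ σ' h; exact h n
  | lam t ih =>
    intro σ σ' h
    simp only [Tm.msubst]
    rw [ih (σ := liftSub σ) (σ' := liftSub σ')]
    intro n
    cases n with
    | zero => rfl
    | succ n => simp only [liftSub, h n]
  | app t u iht ihu => intro σ σ' h; simp only [Tm.msubst, iht h, ihu h]
  | add t u iht ihu => intro σ σ' h; simp only [Tm.msubst, iht h, ihu h]
  | zero => intro _ _ _; rfl

lemma msubst_var_id : ∀ (t : Tm), Tm.msubst Tm.var t = t := by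
  intro t
  induction t with
  | var n => rfl
  | lam t ih =>
    simp only [Tm.msubst]
    rw [msubst_congr t (σ := liftSub Tm.var) (σ' := Tm.var), ih]
    intro n
    cases n with
    | zero => rfl
    | succ n => simp only [liftSub, Tm.shift]; rw [if_neg (by omega)]
  | app t u iht ihu => simp only [Tm.msubst, iht, ihu]
  | add t u iht ihu => simp only [Tm.msubst, iht, ihu]
  | zero => rfl

lemma subst_msubst : ∀ (t : Tm) (σ : ℕ → Tm) (k : ℕ) (v : Tm),
    Tm.subst k v (Tm.msubst σ t) = Tm.msubst (fun n => Tm.subst k v (σ n)) t := by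
  intro t
  induction t with
  | var n => intro σ k v; rfl
  | lam t ih =>
    intro σ k v
    simp only [Tm.msubst, Tm.subst]
    rw [ih (liftSub σ) (k + 1) v]
    refine congrArg Tm.lam (msubst_congr t fun n => ?_)
    cases n with
    | zero =>
      show Tm.subst (k + 1) v (.var 0) = .var 0
      simp only [Tm.subst]
      rw [if_neg (by omega), if_neg (by omega)]
    | succ n =>
      show Tm.subst (k + 1) v (Tm.shift 1 0 (σ n)) = Tm.shift 1 0 (Tm.subst k v (σ n))
      exact (shift_subst_low (σ n) v k 1 0 (by omega)).symm
  | app t u iht ihu => intro σ k v; simp only [Tm.msubst, Tm.subst, iht, ihu]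
  | add t u iht ihu => intro σ k v; simp only [Tm.msubst, Tm.subst, iht, ihu]
  | zero => intro _ _ _; rfl

/-- The key identity: substituting `v` for the fresh variable of a lifted
simultaneous substitution. -/
lemma subst0_msubst_lift (t : Tm) (σ : ℕ → Tm) (v : Tm) :
    Tm.subst 0 v (Tm.msubst (liftSub σ) t) = Tm.msubst (consSub v σ) t := by
  rw [subst_msubst]
  apply msubst_congr
  intro n
  cases n with
  | zero =>
    show Tm.subst 0 v (.var 0) = v
    simp only [Tm.subst, if_pos rfl]
    exact shift_zero v 0
  | succ n =>
    show Tm.subst 0 v (Tm.shift 1 0 (σ n)) = σ n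
    rw [subst_shift_cancel (σ n) v 0 0 1 (by omega) (by omega)]
    exact shift_zero (σ n) 0

end SNProof
namespace SNProof

/-! #### The evaluation predicate `EE` -/

def IsLamTm (t : Tm) : Prop := ∃ b, t = Tm.lam b

/-- Aeq-closed sets of terms. -/
def AeqClosed (S : Set Tm) : Prop := ∀ ⦃p p'⦄, Aeq p p' → p ∈ S → p' ∈ S

/-- `EE S`: strongly normalising terms all of whose λ-summands of all
reducts belong to `S`. -/
def EE (S : Set Tm) : Set Tm :=
  {t | SN t ∧ ∀ w, Relation.ReflTransGen Step t w → ∀ p ∈ ms w, IsLamTm p → p ∈ S}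

lemma EE_sn {S : Set Tm} {t : Tm} (h : t ∈ EE S) : SN t := h.1

lemma EE_mono {S S' : Set Tm} (h : S ⊆ S') : EE S ⊆ EE S' :=
  fun _ ht => ⟨ht.1, fun w hw p hp hl => h (ht.2 w hw p hp hl)⟩

lemma EE_step {S : Set Tm} {t w : Tm} (h : t ∈ EE S) (hw : Step t w) : w ∈ EE S :=
  ⟨h.1.inv hw, fun w' hw' => h.2 w' (Relation.ReflTransGen.head hw hw')⟩

lemma EE_rtg {S : Set Tm} {t w : Tm} (h : t ∈ EE S) (hw : Relation.ReflTransGen Step t w) :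
    w ∈ EE S := by
  induction hw with
  | refl => exact h
  | tail _ hbc ih => exact EE_step ih hbc

lemma EE_lam_piece {S : Set Tm} {t : Tm} (h : t ∈ EE S) {p : Tm} (hp : p ∈ ms t)
    (hl : IsLamTm p) : p ∈ S := h.2 t Relation.ReflTransGen.refl p hp hl

/-- Introduction: it is enough to control one-step reducts and the λ-summands
of the term itself. -/
lemma EE_intro {S : Set Tm} {t : Tm} (hred : ∀ w, Step t w → w ∈ EE S)
    (hself : ∀ p ∈ ms t, IsLamTm p → p ∈ S) : t ∈ EE S := by
  refine ⟨Acc.intro t fun w hw => (hred w hw).1, ?_⟩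
  intro w hw p hp hl
  rcases (Relation.ReflTransGen.cases_head hw) with rfl | ⟨w₁, h1, h2⟩
  · exact hself p hp hl
  · exact (EE_rtg (hred w₁ h1) h2).2 w Relation.ReflTransGen.refl p hp hl

/-- Transfer of λ-summand membership across `Aeq`. -/
lemma lam_piece_partner {S : Set Tm} (hS : AeqClosed S) {x w : Tm}
    (hrel : Multiset.Rel Aeq (ms w) (ms x))
    (hx : ∀ p ∈ ms x, IsLamTm p → p ∈ S) :
    ∀ p ∈ ms w, IsLamTm p → p ∈ S := by
  intro p hp hl
  obtain ⟨a, haM, haeq, _⟩ := rel_partner (rel_symm hrel) hp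
  obtain ⟨b, rfl⟩ := hl
  obtain ⟨b', ha', hbe⟩ := (aeq_shape haeq).2
  exact hS haeq (hx a haM ⟨b', ha'⟩)

lemma EE_aeq {S : Set Tm} (hS : AeqClosed S) {t t' : Tm} (h : Aeq t t') (ht : t ∈ EE S) :
    t' ∈ EE S := by
  refine ⟨sn_aeq h ht.1, ?_⟩
  intro w hw
  rcases (Relation.ReflTransGen.cases_head hw) with rfl | ⟨w₁, h1, h2⟩
  · exact lam_piece_partner hS (aeq_ms h.symm) (ht.2 t Relation.ReflTransGen.refl)
  · exact (EE_rtg (EE_step ht (step_aeq h h1)) h2).2 w Relation.ReflTransGen.refl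

lemma rtg_subsum {x t w : Tm} (hsub : SubSum x t) (hw : Relation.ReflTransGen Step x w) :
    ∃ t', Relation.ReflTransGen Step t t' ∧ SubSum w t' := by
  induction hw with
  | refl => exact ⟨t, Relation.ReflTransGen.refl, hsub⟩
  | tail _ hbc ih =>
    obtain ⟨t', hrtg, hsub'⟩ := ih
    obtain ⟨t'', hstep, hsub''⟩ := subsum_step_lift hsub' hbc
    exact ⟨t'', hrtg.tail hstep, hsub''⟩

lemma EE_subsum {S : Set Tm} (hS : AeqClosed S) {x t : Tm} (hsub : SubSum x t)
    (ht : t ∈ EE S) : x ∈ EE S := by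
  refine ⟨sn_subsum t ht.1 x hsub, ?_⟩
  intro w hw p hp hl
  obtain ⟨t', hrtg, ⟨M, hle, hrel⟩⟩ := rtg_subsum hsub hw
  obtain ⟨a, haM, haeq, _⟩ := rel_partner (rel_symm hrel) hp
  obtain ⟨b, rfl⟩ := hl
  obtain ⟨b', ha', _⟩ := (aeq_shape haeq).2
  exact hS haeq ((EE_rtg ht hrtg).2 t' Relation.ReflTransGen.refl a
    (Multiset.mem_of_le hle haM) ⟨b', ha'⟩)

lemma rtg_add_cases : ∀ {x y w : Tm}, Relation.ReflTransGen Step (.add x y) w →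
    (∃ x' y', Relation.ReflTransGen Step x x' ∧ Relation.ReflTransGen Step y y' ∧
      Aeq w (.add x' y')) ∨
    (∃ x', Relation.ReflTransGen Step x x' ∧ Aeq w x') ∨
    (∃ y', Relation.ReflTransGen Step y y' ∧ Aeq w y') := by
  intro x y w hw
  induction hw with
  | refl =>
    exact Or.inl ⟨x, y, Relation.ReflTransGen.refl, Relation.ReflTransGen.refl, Aeq.refl _⟩
  | tail hab hbc ih =>
    rename_i b c
    rcases ih with ⟨x', y', hx, hy, hb⟩ | ⟨x', hx, hb⟩ | ⟨y', hy, hb⟩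
    · have hstep : Step (.add x' y') c := step_aeq hb.symm hbc
      rcases step_add_cases hstep with ⟨x'', hs, hc⟩ | ⟨y'', hs, hc⟩ |
        ⟨rfl, hc⟩ | ⟨rfl, hc⟩
      · exact Or.inl ⟨x'', y', hx.tail hs, hy, hc⟩
      · exact Or.inl ⟨x', y'', hx, hy.tail hs, hc⟩
      · exact Or.inr (Or.inl ⟨x', hx, hc⟩)
      · exact Or.inr (Or.inr ⟨y', hy, hc⟩)
    · exact Or.inr (Or.inl ⟨c, hx.tail (step_aeq hb.symm hbc), Aeq.refl _⟩)
    · exact Or.inr (Or.inr ⟨c, hy.tail (step_aeq hb.symm hbc), Aeq.refl _⟩)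

lemma EE_add {S : Set Tm} (hS : AeqClosed S) {x y : Tm} (hx : x ∈ EE S) (hy : y ∈ EE S) :
    (Tm.add x y) ∈ EE S := by
  refine ⟨sn_add x hx.1 y hy.1, ?_⟩
  intro w hw
  rcases rtg_add_cases hw with ⟨x', y', hrx, hry, hb⟩ | ⟨x', hrx, hb⟩ | ⟨y', hry, hb⟩
  · refine lam_piece_partner hS (aeq_ms hb) ?_
    intro p hp hl
    rcases Multiset.mem_add.1 (by exact hp) with hm | hm
    · exact (EE_rtg hx hrx).2 x' Relation.ReflTransGen.refl p hm hl
    · exact (EE_rtg hy hry).2 y' Relation.ReflTransGen.refl p hm hl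
  · exact lam_piece_partner hS (aeq_ms hb)
      ((EE_rtg hx hrx).2 x' Relation.ReflTransGen.refl)
  · exact lam_piece_partner hS (aeq_ms hb)
      ((EE_rtg hy hry).2 y' Relation.ReflTransGen.refl)

lemma rtg_zero {w : Tm} (hw : Relation.ReflTransGen Step .zero w) : w = .zero := by
  induction hw with
  | refl => rfl
  | tail _ hbc ih => subst ih; exact absurd rfl (not_step_zero hbc)

lemma rtg_var {n : ℕ} {w : Tm} (hw : Relation.ReflTransGen Step (.var n) w) : w = .var n := by
  induction hw with
  | refl => rfl
  | tail _ hbc ih => subst ih; exact absurd rfl (not_step_var hbc)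

lemma zero_mem_EE (S : Set Tm) : Tm.zero ∈ EE S := by
  refine ⟨Acc.intro _ fun w hw => absurd rfl (not_step_zero hw), ?_⟩
  intro w hw p hp hl
  rw [rtg_zero hw] at hp
  obtain ⟨b, rfl⟩ := hl
  exact absurd (Multiset.mem_singleton.1 hp) (by simp)

lemma var_mem_EE (S : Set Tm) (n : ℕ) : Tm.var n ∈ EE S := by
  refine ⟨Acc.intro _ fun w hw => absurd rfl (not_step_var hw), ?_⟩
  intro w hw p hp hl
  rw [rtg_var hw] at hp
  obtain ⟨b, rfl⟩ := hl
  exact absurd (Multiset.mem_singleton.1 hp) (by simp)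

end SNProof
namespace SNProof

/-- The central lemma: applications of `EE`-terms are in `EE`. -/
lemma app_lemma {S₁ S₂ S₃ : Set Tm} (hS₁ : AeqClosed S₁) (hS₂ : AeqClosed S₂)
    (hS₃ : AeqClosed S₃)
    (Hβ : ∀ b, Tm.lam b ∈ S₁ → ∀ v, IsValue v → (v ∈ S₂ ∨ ∃ m, v = Tm.var m) →
      Tm.subst 0 v b ∈ EE S₃) :
    ∀ p q : Tm, p ∈ EE S₁ → q ∈ EE S₂ → Tm.app p q ∈ EE S₃ := by
  have main : ∀ p : Tm, Acc Lt1 p → ∀ q : Tm, Acc Lt1 q →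
      p ∈ EE S₁ → q ∈ EE S₂ → Tm.app p q ∈ EE S₃ := by
    intro p hap
    induction hap with
    | intro p _ ihp =>
      intro q haq
      induction haq with
      | intro q hq' ihq =>
        intro hp hq
        have haqq : Acc Lt1 q := Acc.intro q hq'
        apply EE_intro
        · intro w hw
          rcases step_app_cases hw with
            ⟨p', hs, hweq⟩ | ⟨q', hs, hweq⟩ | ⟨x₁, x₂, hpeq, hweq⟩ |
            ⟨y₁, y₂, hqeq, hweq⟩ | ⟨rfl, hweq⟩ | ⟨rfl, hweq⟩ | ⟨b, rfl, hqv, hweq⟩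
          · exact EE_aeq hS₃ hweq.symm
              (ihp p' (Or.inl hs) q haqq (EE_step hp hs) hq)
          · exact EE_aeq hS₃ hweq.symm (ihq q' (Or.inl hs) hp (EE_step hq hs))
          · -- t-side distribution
            obtain ⟨hs1, hs2⟩ := subsum_of_aeq_add hpeq
            have hcard : (ms p).card = (ms x₁).card + (ms x₂).card := by
              have := Multiset.card_eq_card_of_rel (aeq_ms hpeq)
              simpa [ms, Multiset.card_add] using this
            have c1 : (ms x₁).card < (ms p).card := by
              have := ms_card_pos x₂; omega
            have c2 : (ms x₂).card < (ms p).card := by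
              have := ms_card_pos x₁; omega
            have e1 := ihp x₁ (Or.inr ⟨hs1, c1⟩) q haqq (EE_subsum hS₁ hs1 hp) hq
            have e2 := ihp x₂ (Or.inr ⟨hs2, c2⟩) q haqq (EE_subsum hS₁ hs2 hp) hq
            exact EE_aeq hS₃ hweq.symm (EE_add hS₃ e1 e2)
          · -- q-side distribution
            obtain ⟨hs1, hs2⟩ := subsum_of_aeq_add hqeq
            have hcard : (ms q).card = (ms y₁).card + (ms y₂).card := by
              have := Multiset.card_eq_card_of_rel (aeq_ms hqeq)
              simpa [ms, Multiset.card_add] using this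
            have c1 : (ms y₁).card < (ms q).card := by
              have := ms_card_pos y₂; omega
            have c2 : (ms y₂).card < (ms q).card := by
              have := ms_card_pos y₁; omega
            have e1 := ihq y₁ (Or.inr ⟨hs1, c1⟩) hp (EE_subsum hS₂ hs1 hq)
            have e2 := ihq y₂ (Or.inr ⟨hs2, c2⟩) hp (EE_subsum hS₂ hs2 hq)
            exact EE_aeq hS₃ hweq.symm (EE_add hS₃ e1 e2)
          · exact EE_aeq hS₃ hweq.symm (zero_mem_EE S₃)
          · exact EE_aeq hS₃ hweq.symm (zero_mem_EE S₃)
          · -- β-step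
            have hbl : Tm.lam b ∈ S₁ :=
              EE_lam_piece hp (by simp [ms]) ⟨b, rfl⟩
            have hv : q ∈ S₂ ∨ ∃ m, q = Tm.var m := by
              cases hqv with
              | var n => exact Or.inr ⟨n, rfl⟩
              | lam c => exact Or.inl (EE_lam_piece hq (by simp [ms]) ⟨c, rfl⟩)
            exact EE_aeq hS₃ hweq.symm (Hβ b hbl q hqv hv)
        · intro p' hp' hl
          rw [show ms (Tm.app p q) = {Tm.app p q} from rfl, Multiset.mem_singleton] at hp'
          subst hp'
          obtain ⟨b, hb⟩ := hl
          exact absurd hb (by simp)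
  intro p q hp hq
  exact main p (acc_lt1 hp.1) q (acc_lt1 hq.1) hp hq

end SNProof
namespace SNProof

/-! #### Interpretation of types -/

/-- Admissible sets of "semantic values" (used for type variables). -/
def Adm (A : Set Tm) : Prop :=
  AeqClosed A ∧ (∀ p ∈ A, IsLamTm p) ∧ (∀ p ∈ A, SN p) ∧
    (∀ p ∈ A, ∀ w, Step p w → w ∈ A)

lemma adm_empty : Adm (∅ : Set Tm) :=
  ⟨fun _ _ _ h => h.elim, fun _ h => h.elim, fun _ h => h.elim, fun _ h => h.elim⟩

lemma adm_consV {A : Set Tm} {ρ : ℕ → Set Tm} (hA : Adm A) (hρ : ∀ n, Adm (ρ n)) :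
    ∀ n, Adm (consV A ρ n) := by
  intro n
  cases n with
  | zero => exact hA
  | succ n => exact hρ n

mutual

/-- Semantic values of a unit type. -/
def VSU : UTy → (ℕ → Set Tm) → Set Tm
  | .var n, ρ => ρ n
  | .arrow U T, ρ =>
      {p | ∃ b, p = Tm.lam b ∧ SN p ∧
        ∀ v, IsValue v → (v ∈ VSU U ρ ∨ ∃ m, v = Tm.var m) →
          Tm.subst 0 v b ∈ EE (VST T ρ)}
  | .all U, ρ => {p | ∀ A : Set Tm, Adm A → p ∈ VSU U (consV A ρ)}

/-- Semantic values of a type (the union over its unit leaves). -/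
def VST : Ty → (ℕ → Set Tm) → Set Tm
  | .unit U, ρ => VSU U ρ
  | .add T R, ρ => VST T ρ ∪ VST R ρ
  | .zero, _ => ∅

end

mutual

theorem adm_VSU : ∀ (U : UTy) (ρ : ℕ → Set Tm), (∀ n, Adm (ρ n)) → Adm (VSU U ρ)
  | .var n, ρ, hρ => hρ n
  | .arrow U T, ρ, hρ => by
    refine ⟨?_, ?_, ?_, ?_⟩
    · rintro p p' haeq ⟨b, rfl, hsn, hv⟩
      obtain ⟨b', rfl, hbe⟩ := aeq_lam haeq
      exact ⟨b', rfl, sn_aeq haeq hsn, fun v hvv hvm =>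
        EE_aeq (adm_VST T ρ hρ).1 (aeq_subst_left hbe 0 v) (hv v hvv hvm)⟩
    · rintro p ⟨b, rfl, _, _⟩; exact ⟨b, rfl⟩
    · rintro p ⟨b, rfl, hsn, _⟩; exact hsn
    · rintro p ⟨b, rfl, hsn, hv⟩ w hw
      obtain ⟨b', hsb, hweq⟩ := step_lam_cases hw
      obtain ⟨b'', rfl, hbe⟩ := aeq_lam hweq.symm
      exact ⟨b'', rfl, sn_step hsn hw, fun v hvv hvm =>
        EE_aeq (adm_VST T ρ hρ).1 (aeq_subst_left hbe 0 v)
          (EE_step (hv v hvv hvm) (step_subst hsb hvv 0))⟩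
  | .all U, ρ, hρ => by
    refine ⟨?_, ?_, ?_, ?_⟩
    · intro p p' haeq hp A hA
      exact (adm_VSU U (consV A ρ) (adm_consV hA hρ)).1 haeq (hp A hA)
    · intro p hp
      exact (adm_VSU U (consV ∅ ρ) (adm_consV adm_empty hρ)).2.1 p (hp ∅ adm_empty)
    · intro p hp
      exact (adm_VSU U (consV ∅ ρ) (adm_consV adm_empty hρ)).2.2.1 p (hp ∅ adm_empty)
    · intro p hp w hw A hA
      exact (adm_VSU U (consV A ρ) (adm_consV hA hρ)).2.2.2 p (hp A hA) w hw

theorem adm_VST : ∀ (T : Ty) (ρ : ℕ → Set Tm), (∀ n, Adm (ρ n)) → Adm (VST T ρ)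
  | .unit U, ρ, hρ => adm_VSU U ρ hρ
  | .add T R, ρ, hρ => by
    obtain ⟨a1, a2, a3, a4⟩ := adm_VST T ρ hρ
    obtain ⟨b1, b2, b3, b4⟩ := adm_VST R ρ hρ
    refine ⟨?_, ?_, ?_, ?_⟩
    · rintro p p' haeq (hp | hp)
      · exact Or.inl (a1 haeq hp)
      · exact Or.inr (b1 haeq hp)
    · rintro p (hp | hp)
      · exact a2 p hp
      · exact b2 p hp
    · rintro p (hp | hp)
      · exact a3 p hp
      · exact b3 p hp
    · rintro p (hp | hp) w hw
      · exact Or.inl (a4 p hp w hw)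
      · exact Or.inr (b4 p hp w hw)
  | .zero, ρ, hρ => adm_empty

end

/-! #### Valuation lemmas -/

def liftVal (d c : ℕ) (ρ : ℕ → Set Tm) : ℕ → Set Tm :=
  fun n => if n < c then ρ n else ρ (n + d)

def substVal (k : ℕ) (V : UTy) (ρ : ℕ → Set Tm) : ℕ → Set Tm :=
  fun n => if n < k then ρ n else if n = k then VSU V (fun m => ρ (m + k)) else ρ (n - 1)

lemma VSU_congr {U : UTy} {ρ ρ' : ℕ → Set Tm} (h : ∀ n, ρ n = ρ' n) :
    VSU U ρ = VSU U ρ' := congrArg (VSU U) (funext h)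

lemma VST_congr {T : Ty} {ρ ρ' : ℕ → Set Tm} (h : ∀ n, ρ n = ρ' n) :
    VST T ρ = VST T ρ' := congrArg (VST T) (funext h)

mutual

theorem VSU_shift : ∀ (U : UTy) (ρ : ℕ → Set Tm) (d c : ℕ),
    VSU (UTy.shift d c U) ρ = VSU U (liftVal d c ρ)
  | .var n, ρ, d, c => by
    rcases Nat.lt_or_ge n c with h | h
    · rw [show UTy.shift d c (.var n) = .var n by
          simp only [UTy.shift]; rw [if_pos h]]
      show ρ n = liftVal d c ρ n
      simp only [liftVal]; rw [if_pos h]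
    · rw [show UTy.shift d c (.var n) = .var (n + d) by
          simp only [UTy.shift]; rw [if_neg (show ¬n < c by omega)]]
      show ρ (n + d) = liftVal d c ρ n
      simp only [liftVal]; rw [if_neg (show ¬n < c by omega)]
  | .arrow U T, ρ, d, c => by
    simp only [UTy.shift, VSU]
    rw [VSU_shift U ρ d c, VST_shift T ρ d c]
  | .all U, ρ, d, c => by
    simp only [UTy.shift, VSU]
    ext p
    constructor
    · intro hp A hA
      have := hp A hA
      rw [VSU_shift U (consV A ρ) d (c + 1)] at this
      rw [show consV A (liftVal d c ρ) = liftVal d (c + 1) (consV A ρ) from funext fun n => by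
        cases n with
        | zero =>
          show A = liftVal d (c + 1) (consV A ρ) 0
          simp only [liftVal]
          rw [if_pos (show 0 < c + 1 by omega)]
          rfl
        | succ n =>
          show liftVal d c ρ n = liftVal d (c + 1) (consV A ρ) (n + 1)
          simp only [liftVal]
          by_cases h : n < c
          · rw [if_pos h, if_pos (show n + 1 < c + 1 by omega)]
            rfl
          · rw [if_neg h, if_neg (show ¬n + 1 < c + 1 by omega),
              show n + 1 + d = (n + d) + 1 by omega]
            rfl]
      exact this
    · intro hp A hA
      rw [VSU_shift U (consV A ρ) d (c + 1)]
      have := hp A hA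
      rw [show consV A (liftVal d c ρ) = liftVal d (c + 1) (consV A ρ) from funext fun n => by
        cases n with
        | zero =>
          show A = liftVal d (c + 1) (consV A ρ) 0
          simp only [liftVal]
          rw [if_pos (show 0 < c + 1 by omega)]
          rfl
        | succ n =>
          show liftVal d c ρ n = liftVal d (c + 1) (consV A ρ) (n + 1)
          simp only [liftVal]
          by_cases h : n < c
          · rw [if_pos h, if_pos (show n + 1 < c + 1 by omega)]
            rfl
          · rw [if_neg h, if_neg (show ¬n + 1 < c + 1 by omega),
              show n + 1 + d = (n + d) + 1 by omega]
            rfl] at this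
      exact this

theorem VST_shift : ∀ (T : Ty) (ρ : ℕ → Set Tm) (d c : ℕ),
    VST (Ty.shift d c T) ρ = VST T (liftVal d c ρ)
  | .unit U, ρ, d, c => VSU_shift U ρ d c
  | .add T R, ρ, d, c => by
    simp only [Ty.shift, VST]
    rw [VST_shift T ρ d c, VST_shift R ρ d c]
  | .zero, ρ, d, c => rfl

end

mutual

theorem VSU_subst : ∀ (U : UTy) (ρ : ℕ → Set Tm) (k : ℕ) (V : UTy),
    VSU (UTy.subst k V U) ρ = VSU U (substVal k V ρ)
  | .var n, ρ, k, V => by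
    rcases Nat.lt_trichotomy n k with h | h | h
    · rw [show UTy.subst k V (.var n) = .var n by
          simp only [UTy.subst]
          rw [if_neg (show ¬n = k by omega), if_neg (show ¬k < n by omega)]]
      show ρ n = substVal k V ρ n
      simp only [substVal]; rw [if_pos h]
    · rw [show UTy.subst k V (.var n) = UTy.shift k 0 V by
          simp only [UTy.subst]; rw [if_pos h]]
      rw [VSU_shift V ρ k 0]
      show VSU V (liftVal k 0 ρ) = substVal k V ρ n
      rw [show substVal k V ρ n = VSU V (fun m => ρ (m + k)) by
        simp only [substVal]; rw [if_neg (show ¬n < k by omega), if_pos h]]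
      exact VSU_congr fun m => by simp [liftVal]
    · rw [show UTy.subst k V (.var n) = .var (n - 1) by
          simp only [UTy.subst]; rw [if_neg (show ¬n = k by omega), if_pos h]]
      show ρ (n - 1) = substVal k V ρ n
      simp only [substVal]
      rw [if_neg (show ¬n < k by omega), if_neg (show ¬n = k by omega)]
  | .arrow U T, ρ, k, V => by
    simp only [UTy.subst, VSU]
    rw [VSU_subst U ρ k V, VST_subst T ρ k V]
  | .all U, ρ, k, V => by
    simp only [UTy.subst, VSU]
    ext p
    have key : ∀ A : Set Tm, consV A (substVal k V ρ) = substVal (k + 1) V (consV A ρ) := by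
      intro A
      funext n
      cases n with
      | zero =>
        show A = substVal (k + 1) V (consV A ρ) 0
        simp only [substVal]
        rw [if_pos (show 0 < k + 1 by omega)]
        rfl
      | succ n =>
        show substVal k V ρ n = substVal (k + 1) V (consV A ρ) (n + 1)
        simp only [substVal]
        rcases Nat.lt_trichotomy n k with h | h | h
        · rw [if_pos h, if_pos (show n + 1 < k + 1 by omega)]
          rfl
        · rw [if_neg (show ¬n < k by omega), if_pos h,
            if_neg (show ¬n + 1 < k + 1 by omega), if_pos (show n + 1 = k + 1 by omega)]
          refine congrArg (VSU V) (funext fun m => ?_)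
          show ρ (m + k) = consV A ρ (m + (k + 1))
          rw [show m + (k + 1) = (m + k) + 1 by omega]
          rfl
        · rw [if_neg (show ¬n < k by omega), if_neg (show ¬n = k by omega),
            if_neg (show ¬n + 1 < k + 1 by omega), if_neg (show ¬n + 1 = k + 1 by omega)]
          obtain ⟨m, rfl⟩ : ∃ m, n = m + 1 := ⟨n - 1, by omega⟩
          rfl
    constructor
    · intro hp A hA
      have := hp A hA
      rw [VSU_subst U (consV A ρ) (k + 1) V] at this
      rw [key A]
      exact this
    · intro hp A hA
      rw [VSU_subst U (consV A ρ) (k + 1) V, ← key A]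
      exact hp A hA

theorem VST_subst : ∀ (T : Ty) (ρ : ℕ → Set Tm) (k : ℕ) (V : UTy),
    VST (Ty.subst k V T) ρ = VST T (substVal k V ρ)
  | .unit U, ρ, k, V => VSU_subst U ρ k V
  | .add T R, ρ, k, V => by
    simp only [Ty.subst, VST]
    rw [VST_subst T ρ k V, VST_subst R ρ k V]
  | .zero, ρ, k, V => rfl

end

end SNProof
namespace SNProof

/-! #### Invariance of the interpretation under type equivalence -/

theorem VSU_ueq {U₀ U₀' : UTy} (h₀ : UEq U₀ U₀') : ∀ ρ, VSU U₀ ρ = VSU U₀' ρ := by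
  refine UEq.rec (motive_1 := fun U U' _ => ∀ ρ, VSU U ρ = VSU U' ρ)
    (motive_2 := fun T T' _ => ∀ ρ, VST T ρ = VST T' ρ)
    ?_ ?_ ?_ ?_ ?_ ?_ ?_ ?_ ?_ ?_ ?_ ?_ ?_ h₀
  · intro U ρ; rfl
  · intro U V _ ih ρ; exact (ih ρ).symm
  · intro U V W _ _ ih1 ih2 ρ; exact (ih1 ρ).trans (ih2 ρ)
  · intro U U' T T' _ _ ih1 ih2 ρ
    simp only [VSU]
    rw [ih1 ρ, ih2 ρ]
  · intro U U' _ ih ρ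
    simp only [VSU]
    ext p
    exact ⟨fun hp A hA => (ih (consV A ρ)) ▸ hp A hA,
           fun hp A hA => (ih (consV A ρ)).symm ▸ hp A hA⟩
  · intro T ρ; rfl
  · intro T R _ ih ρ; exact (ih ρ).symm
  · intro T R S _ _ ih1 ih2 ρ; exact (ih1 ρ).trans (ih2 ρ)
  · intro U U' _ ih ρ; exact ih ρ
  · intro T T' R R' _ _ ih1 ih2 ρ
    simp only [VST]
    rw [ih1 ρ, ih2 ρ]
  · intro T R ρ
    simp only [VST]
    exact Set.union_comm _ _
  · intro T R S ρ
    simp only [VST]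
    exact (Set.union_assoc _ _ _).symm
  · intro T ρ
    simp only [VST]
    exact Set.union_empty _

theorem VST_teq {T₀ T₀' : Ty} (h₀ : TEq T₀ T₀') : ∀ ρ, VST T₀ ρ = VST T₀' ρ := by
  refine TEq.rec (motive_1 := fun U U' _ => ∀ ρ, VSU U ρ = VSU U' ρ)
    (motive_2 := fun T T' _ => ∀ ρ, VST T ρ = VST T' ρ)
    ?_ ?_ ?_ ?_ ?_ ?_ ?_ ?_ ?_ ?_ ?_ ?_ ?_ h₀
  · intro U ρ; rfl
  · intro U V _ ih ρ; exact (ih ρ).symm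
  · intro U V W _ _ ih1 ih2 ρ; exact (ih1 ρ).trans (ih2 ρ)
  · intro U U' T T' _ _ ih1 ih2 ρ
    simp only [VSU]
    rw [ih1 ρ, ih2 ρ]
  · intro U U' _ ih ρ
    simp only [VSU]
    ext p
    exact ⟨fun hp A hA => (ih (consV A ρ)) ▸ hp A hA,
           fun hp A hA => (ih (consV A ρ)).symm ▸ hp A hA⟩
  · intro T ρ; rfl
  · intro T R _ ih ρ; exact (ih ρ).symm
  · intro T R S _ _ ih1 ih2 ρ; exact (ih1 ρ).trans (ih2 ρ)
  · intro U U' _ ih ρ; exact ih ρ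
  · intro T T' R R' _ _ ih1 ih2 ρ
    simp only [VST]
    rw [ih1 ρ, ih2 ρ]
  · intro T R ρ
    simp only [VST]
    exact Set.union_comm _ _
  · intro T R S ρ
    simp only [VST]
    exact (Set.union_assoc _ _ _).symm
  · intro T ρ
    simp only [VST]
    exact Set.union_empty _

/-! #### Sums of types -/

lemma VST_foldl : ∀ (Ts : List Ty) (acc : Ty) (ρ : ℕ → Set Tm) (p : Tm),
    p ∈ VST (Ts.foldl Ty.add acc) ρ ↔ (p ∈ VST acc ρ ∨ ∃ T ∈ Ts, p ∈ VST T ρ) := by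
  intro Ts
  induction Ts with
  | nil => intro acc ρ p; simp
  | cons T Ts ih =>
    intro acc ρ p
    show p ∈ VST (Ts.foldl Ty.add (acc.add T)) ρ ↔ _
    rw [ih (acc.add T) ρ p]
    constructor
    · rintro ((h | h) | ⟨T', hT', h⟩)
      · exact Or.inl h
      · exact Or.inr ⟨T, List.mem_cons_self, h⟩
      · exact Or.inr ⟨T', List.mem_cons_of_mem _ hT', h⟩
    · rintro (h | ⟨T', hT', h⟩)
      · exact Or.inl (Or.inl h)
      · rcases List.mem_cons.1 hT' with rfl | hT'
        · exact Or.inl (Or.inr h)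
        · exact Or.inr ⟨T', hT', h⟩

lemma VST_sumT {Ts : List Ty} {ρ : ℕ → Set Tm} {p : Tm} :
    p ∈ VST (sumT Ts) ρ ↔ ∃ T ∈ Ts, p ∈ VST T ρ := by
  rw [show sumT Ts = Ts.foldl Ty.add Ty.zero from rfl, VST_foldl]
  simp [VST]

/-! #### Semantic instantiation of quantifiers -/

lemma substVal_zero (V : UTy) (ρ : ℕ → Set Tm) :
    ∀ n, substVal 0 V ρ n = consV (VSU V ρ) ρ n := by
  intro n
  cases n with
  | zero => rfl
  | succ n => rfl

lemma inst_inner : ∀ (k : ℕ) (W V : UTy) (ρ : ℕ → Set Tm), (∀ n, Adm (ρ n)) →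
    ∀ p, p ∈ VSU (allN (k + 1) W) ρ → p ∈ VSU (allN k (UTy.subst 0 V W)) ρ := by
  intro k
  induction k with
  | zero =>
    intro W V ρ hρ p hp
    show p ∈ VSU (UTy.subst 0 V W) ρ
    rw [VSU_subst W ρ 0 V, VSU_congr (substVal_zero V ρ)]
    exact hp (VSU V ρ) (adm_VSU V ρ hρ)
  | succ k ih =>
    intro W V ρ hρ p hp
    intro A hA
    exact ih W V (consV A ρ) (adm_consV hA hρ) p (hp A hA)

lemma msubst_sem : ∀ (Vs : List UTy) (W : UTy) (ρ : ℕ → Set Tm), (∀ n, Adm (ρ n)) →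
    ∀ p, p ∈ VSU (allN Vs.length W) ρ → p ∈ VSU (UTy.msubst Vs W) ρ := by
  intro Vs
  induction Vs with
  | nil => intro W ρ hρ p hp; exact hp
  | cons V Vs ih =>
    intro W ρ hρ p hp
    show p ∈ VSU (UTy.msubst Vs (UTy.subst 0 V W)) ρ
    exact ih (UTy.subst 0 V W) ρ hρ p (inst_inner Vs.length W V ρ hρ p hp)

lemma msubst_arrow : ∀ (Vs : List UTy) (U : UTy) (T : Ty),
    UTy.msubst Vs (.arrow U T) = .arrow (UTy.msubst Vs U) (Ty.msubst Vs T) := by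
  intro Vs
  induction Vs with
  | nil => intro U T; rfl
  | cons V Vs ih =>
    intro U T
    show UTy.msubst Vs (UTy.subst 0 V (.arrow U T)) = _
    rw [show UTy.subst 0 V (.arrow U T) = .arrow (UTy.subst 0 V U) (Ty.subst 0 V T) from rfl]
    exact ih (UTy.subst 0 V U) (Ty.subst 0 V T)

/-- Semantics of the lifted context. -/
lemma VSU_lift (U : UTy) (A : Set Tm) (ρ : ℕ → Set Tm) :
    VSU (UTy.shift 1 0 U) (consV A ρ) = VSU U ρ := by
  rw [VSU_shift U (consV A ρ) 1 0]
  exact VSU_congr fun n => by simp [liftVal, consV]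

/-- Admissible sets sit inside their own `EE`. -/
lemma adm_sub_EE {S : Set Tm} (hS : Adm S) : S ⊆ EE S := by
  intro p hp
  refine ⟨hS.2.2.1 p hp, ?_⟩
  intro w hw
  have hwS : w ∈ S := by
    induction hw with
    | refl => exact hp
    | tail _ hbc ih => exact hS.2.2.2 _ ih _ hbc
  intro q hq hl
  obtain ⟨b, rfl⟩ := hS.2.1 w hwS
  rw [show ms (Tm.lam b) = {Tm.lam b} from rfl, Multiset.mem_singleton] at hq
  subst hq
  exact hwS

end SNProof
namespace SNProof

lemma sn_of_subst : ∀ {s : Tm}, SN s → ∀ {t v : Tm} {k : ℕ}, IsValue v →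
    s = Tm.subst k v t → SN t := by
  intro s hs
  induction hs with
  | intro s h ih =>
    intro t v k hv he
    constructor
    intro w hw
    exact ih (Tm.subst k v w) (by rw [he]; exact step_subst hw hv k) hv rfl

lemma sn_lam : ∀ (b : Tm), SN b → SN (Tm.lam b) := by
  intro b hb
  induction hb with
  | intro b h ih =>
    constructor
    intro w hw
    obtain ⟨b', hs, hweq⟩ := step_lam_cases hw
    exact sn_aeq hweq.symm (ih b' hs)

/-! #### Adequacy -/

theorem adequacy : ∀ {Γ : List UTy} {t : Tm} {T : Ty}, Typing Γ t T →
    ∀ (ρ : ℕ → Set Tm) (σ : ℕ → Tm), (∀ n, Adm (ρ n)) →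
    (∀ n U, Γ[n]? = some U → IsValue (σ n) ∧ (σ n ∈ VSU U ρ ∨ ∃ m, σ n = Tm.var m)) →
    Tm.msubst σ t ∈ EE (VST T ρ) := by
  intro Γ t T h
  induction h with
  | @ax Γ n U hΓ =>
    intro ρ σ hρ hσ
    obtain ⟨hval, hmem | ⟨m, hvar⟩⟩ := hσ n U hΓ
    · exact adm_sub_EE (adm_VSU U ρ hρ) hmem
    · show σ n ∈ EE (VSU U ρ)
      rw [hvar]
      exact var_mem_EE _ m
  | axZero =>
    intro ρ σ hρ hσ
    exact zero_mem_EE _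
  | equiv hty hteq ih =>
    intro ρ σ hρ hσ
    rw [← VST_teq hteq ρ]
    exact ih ρ σ hρ hσ
  | @arrI Γ U t T hty ih =>
    intro ρ σ hρ hσ
    show Tm.lam (Tm.msubst (liftSub σ) t) ∈ EE (VSU (.arrow U T) ρ)
    have hinst : ∀ v, IsValue v → (v ∈ VSU U ρ ∨ ∃ m, v = Tm.var m) →
        Tm.subst 0 v (Tm.msubst (liftSub σ) t) ∈ EE (VST T ρ) := by
      intro v hv hvm
      rw [subst0_msubst_lift]
      apply ih ρ (consSub v σ) hρ
      intro n U' hn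
      cases n with
      | zero =>
        simp only [List.getElem?_cons_zero, Option.some.injEq] at hn
        subst hn
        exact ⟨hv, hvm⟩
      | succ n =>
        simp only [List.getElem?_cons_succ] at hn
        exact hσ n U' hn
    have hSNbody : SN (Tm.msubst (liftSub σ) t) :=
      sn_of_subst (EE_sn (hinst (Tm.var 0) (IsValue.var 0) (Or.inr ⟨0, rfl⟩)))
        (IsValue.var 0) rfl
    have hmem : Tm.lam (Tm.msubst (liftSub σ) t) ∈ VSU (.arrow U T) ρ :=
      ⟨_, rfl, sn_lam _ hSNbody, fun v hv hvm => hinst v hv hvm⟩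
    exact adm_sub_EE (adm_VSU (.arrow U T) ρ hρ) hmem
  | @arrE Γ t u k U Ts Vs hTs hVs hlen hty1 hty2 ih1 ih2 =>
    intro ρ σ hρ hσ
    show Tm.app (Tm.msubst σ t) (Tm.msubst σ u) ∈ EE _
    refine app_lemma (adm_VST _ ρ hρ).1 (adm_VST _ ρ hρ).1 (adm_VST _ ρ hρ).1 ?_ _ _
      (ih1 ρ σ hρ hσ) (ih2 ρ σ hρ hσ)
    intro b hb v hv hvm
    rw [VST_sumT] at hb
    obtain ⟨T', hT', hbT⟩ := hb
    obtain ⟨Ti, hTi, rfl⟩ := List.mem_map.1 hT'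
    have key : ∀ Vj ∈ Vs, (v ∈ VSU (UTy.msubst Vj U) ρ ∨ ∃ m, v = Tm.var m) →
        Tm.subst 0 v b ∈
          EE (VST (sumT ((Ts.map fun Ti => Vs.map fun Vj => Ty.msubst Vj Ti).flatten)) ρ) := by
      intro Vj hVj hvm'
      have hlam : Tm.lam b ∈ VSU (UTy.msubst Vj (.arrow U Ti)) ρ := by
        apply msubst_sem Vj _ ρ hρ
        rw [hlen Vj hVj]
        exact hbT
      rw [msubst_arrow] at hlam
      obtain ⟨b', hb', hsn, hcl⟩ := hlam
      injection hb' with hbb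
      subst hbb
      refine EE_mono ?_ (hcl v hv hvm')
      intro q hq
      rw [VST_sumT]
      refine ⟨Ty.msubst Vj Ti, ?_, hq⟩
      rw [List.mem_flatten]
      exact ⟨Vs.map fun Vj => Ty.msubst Vj Ti,
        List.mem_map.2 ⟨Ti, hTi, rfl⟩, List.mem_map.2 ⟨Vj, hVj, rfl⟩⟩
    rcases hvm with hvS | hvar
    · rw [VST_sumT] at hvS
      obtain ⟨T'', hT'', hvT⟩ := hvS
      obtain ⟨Vj, hVj, rfl⟩ := List.mem_map.1 hT''
      exact key Vj hVj (Or.inl hvT)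
    · obtain ⟨Vj, hVj⟩ := List.exists_mem_of_ne_nil Vs hVs
      exact key Vj hVj (Or.inr hvar)
  | @addI Γ t u T R h1 h2 ih1 ih2 =>
    intro ρ σ hρ hσ
    show Tm.add (Tm.msubst σ t) (Tm.msubst σ u) ∈ EE (VST (.add T R) ρ)
    exact EE_add (adm_VST (.add T R) ρ hρ).1
      (EE_mono Set.subset_union_left (ih1 ρ σ hρ hσ))
      (EE_mono Set.subset_union_right (ih2 ρ σ hρ hσ))
  | @allE Γ t U V hty ih =>
    intro ρ σ hρ hσ
    refine EE_mono ?_ (ih ρ σ hρ hσ)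
    intro p hp
    show p ∈ VSU (UTy.subst 0 V U) ρ
    rw [VSU_subst U ρ 0 V, VSU_congr (substVal_zero V ρ)]
    exact hp (VSU V ρ) (adm_VSU V ρ hρ)
  | @allI Γ t U hty ih =>
    intro ρ σ hρ hσ
    have hinst : ∀ A : Set Tm, Adm A → Tm.msubst σ t ∈ EE (VSU U (consV A ρ)) := by
      intro A hA
      apply ih (consV A ρ) σ (adm_consV hA hρ)
      intro n U' hn
      rw [show liftCtx Γ = Γ.map (UTy.shift 1 0) from rfl, List.getElem?_map] at hn
      cases hΓn : Γ[n]? with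
      | none => rw [hΓn] at hn; cases hn
      | some U₀ =>
        rw [hΓn] at hn
        simp only [Option.map_some, Option.some.injEq] at hn
        obtain ⟨hval, hmem⟩ := hσ n U₀ hΓn
        refine ⟨hval, ?_⟩
        rcases hmem with hm | hm
        · left
          rw [← hn, VSU_lift U₀ A ρ]
          exact hm
        · right; exact hm
    constructor
    · exact EE_sn (hinst ∅ adm_empty)
    · intro w hw p hp hl A hA
      exact (hinst A hA).2 w hw p hp hl

/-- Every typable term is strongly normalising. -/
theorem sn_typed {Γ : List UTy} {t : Tm} {T : Ty} (ht : Typing Γ t T) : SN t := by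
  have h := adequacy ht (fun _ => ∅) Tm.var (fun _ => adm_empty)
    (fun n U _ => ⟨IsValue.var n, Or.inr ⟨n, rfl⟩⟩)
  rw [msubst_var_id] at h
  exact EE_sn h

end SNProof

/-- **Strong Normalisation** (Theorem 2).  Every term typable in Add is
strongly normalising: there is no infinite reduction sequence starting
from a typable term. -/
theorem strong_normalisation {Γ : List UTy} {t : Tm} {T : Ty}
    (ht : Typing Γ t T) :
    ¬ ∃ f : ℕ → Tm, f 0 = t ∧ ∀ n, Step (f n) (f (n + 1)) := by
  rintro ⟨f, hf0, hfs⟩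
  have hsn := SNProof.sn_typed ht
  have main : ∀ s : Tm, SN s → ∀ g : ℕ → Tm, g 0 = s → (∀ n, Step (g n) (g (n + 1))) →
      False := by
    intro s hs
    induction hs with
    | intro s h ih =>
      intro g hg0 hgs
      exact ih (g 1) (by rw [← hg0]; exact hgs 0) (fun n => g (n + 1)) rfl
        (fun n => hgs (n + 1))
  exact main t hsn f hf0 hfs
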